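/- arXiv:1112.3601 — 4 statements merged into one kernel-verified Lean document; each statement's English description precedes it below -/
import Mathlib

section
/- Let x, y be elements of a (possibly noncommutative) ring of formal power series over Q(q^{1/2}) satisfying x y = q^ε y x with ε = ±1. Then (−q^{1/2} x; q)_∞^{−ε} · y · (−q^{1/2} x; q)_∞^{ε} = y(1 + q^{ε/2} x), where (z; q)_∞ = ∏_{n≥0} (1 − q^n z) is the q-Pochhammer symbol. -/
open Filter

/-- Let `x, y` be elements of a topological ring in which
`x y = q^ε y x` with `ε = ±1`, and suppose the `q`-Pochhammer product
`(−q^{1/2} x; q)_∞ = ∏_{n≥0} (1 + q^{n+1/2} x)` converges to an invertible element `P`.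
Then `(−q^{1/2} x; q)_∞^{−ε} · y · (−q^{1/2} x; q)_∞^{ε} = y (1 + q^{ε/2} x)`.
Here `s` plays the role of the central invertible element `q^{1/2}`, so
`q^{n+1/2} = s^{2n+1}`, `q^ε = s^{2ε}` and `q^{ε/2} = s^ε`. -/
theorem pochhammer_conjugation
    {A : Type*} [Ring A] [TopologicalSpace A] [IsTopologicalRing A] [T2Space A]
    (s P : Aˣ) (hs_central : ∀ a : A, Commute (↑s) a)
    (x y : A) (ε : ℤ) (hε : ε = 1 ∨ ε = -1)
    (hcomm : x * y = ((s ^ (2 * ε) : Aˣ) : A) * (y * x))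
    (hP : Tendsto (fun N : ℕ => (((List.range N).map (fun n => 1 + ((s ^ (2 * n + 1) : Aˣ) : A) * x)).prod))
      atTop (nhds (P : A))) :
    ((P ^ (-ε) : Aˣ) : A) * y * ((P ^ ε : Aˣ) : A) = y * (1 + ((s ^ ε : Aˣ) : A) * x) := by
  set t : A := (s : A) with ht
  set f : ℕ → A := fun n => 1 + ((s ^ (2 * n + 1) : Aˣ) : A) * x with hf
  set Pn : ℕ → A := fun N => ((List.range N).map f).prod with hPn
  have hfn : ∀ n : ℕ, f n = 1 + t ^ (2 * n + 1) * x := by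
    intro n; simp [hf, ht, Units.val_pow_eq_pow_val]
  have hPsucc : ∀ N : ℕ, Pn (N + 1) = Pn N * f N := by
    intro N
    simp [hPn, List.range_succ]
  have hc : ∀ (k : ℕ) (a : A), t ^ k * a = a * t ^ k := fun k a =>
    ((hs_central a).pow_left k).eq
  have hff : ∀ j k : ℕ, (1 + t ^ j * x) * (1 + t ^ k * x) = (1 + t ^ k * x) * (1 + t ^ j * x) := by
    intro j k
    have h1 : Commute (t ^ j * x) (t ^ k * x) :=
      (((hs_central _).pow_left j)).mul_left (((hs_central x).pow_left k).symm.mul_right (Commute.refl x))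
    exact ((Commute.one_right _).add_right ((Commute.one_left _).add_left h1)).eq
  rcases hε with rfl | rfl
  · -- ε = 1
    have hxy : x * y = t ^ 2 * (y * x) := by
      have : ((s ^ (2 * (1:ℤ)) : Aˣ) : A) = t ^ 2 := by
        norm_num
        exact Units.val_pow_eq_pow_val s 2
      rw [hcomm, this]
    have key : ∀ n : ℕ, (1 + t ^ (2 * n + 1) * x) * y = y * (1 + t ^ (2 * n + 3) * x) := by
      intro n
      have h1 : t ^ (2 * n + 1) * (x * y) = y * (t ^ (2 * n + 3) * x) := by
        rw [hxy, ← mul_assoc, ← pow_add]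
        have : 2 * n + 1 + 2 = 2 * n + 3 := by ring
        rw [this, ← mul_assoc, hc (2 * n + 3) y, mul_assoc]
      calc (1 + t ^ (2 * n + 1) * x) * y = y + t ^ (2 * n + 1) * (x * y) := by
            rw [add_mul, one_mul, mul_assoc]
        _ = y * (1 + t ^ (2 * n + 3) * x) := by rw [h1, mul_add, mul_one]
    have claim : ∀ N : ℕ, Pn N * y * (1 + t * x) = y * Pn (N + 1) := by
      intro N
      induction N with
      | zero =>
        simp [hPn, List.range_succ, hfn 0, pow_one]
      | succ N ih =>
        have h3' : 2 * (N + 1) + 1 = 2 * N + 3 := by ring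
        rw [hPsucc (N + 1), hfn (N + 1), h3']
        conv_lhs => rw [hPsucc N, hfn N]
        calc Pn N * (1 + t ^ (2 * N + 1) * x) * y * (1 + t * x)
            = Pn N * (y * (1 + t ^ (2 * N + 3) * x)) * (1 + t * x) := by
              rw [mul_assoc (Pn N), key N]
          _ = Pn N * y * ((1 + t ^ (2 * N + 3) * x) * (1 + t ^ 1 * x)) := by
              rw [pow_one, mul_assoc, mul_assoc, mul_assoc]
          _ = Pn N * y * (1 + t * x) * (1 + t ^ (2 * N + 3) * x) := by
              rw [hff (2 * N + 3) 1, pow_one, ← mul_assoc]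
          _ = y * (Pn (N + 1) * (1 + t ^ (2 * N + 3) * x)) := by rw [ih, mul_assoc]
    have lim1 : Tendsto (fun N => Pn N * y * (1 + t * x)) atTop
        (nhds ((P : A) * y * (1 + t * x))) := (hP.mul_const y).mul_const _
    have lim2 : Tendsto (fun N => y * Pn (N + 1)) atTop (nhds (y * (P : A))) :=
      (hP.comp (tendsto_add_atTop_nat 1)).const_mul y
    have main : (P : A) * y * (1 + t * x) = y * (P : A) :=
      tendsto_nhds_unique (lim1.congr fun N => claim N) lim2
    have goal1 : ((P⁻¹ : Aˣ) : A) * y * (P : A) = y * (1 + t * x) := by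
      calc ((P⁻¹ : Aˣ) : A) * y * (P : A) = ((P⁻¹ : Aˣ) : A) * (y * (P : A)) := by
            rw [mul_assoc]
        _ = ((P⁻¹ : Aˣ) : A) * ((P : A) * (y * (1 + t * x))) := by
            rw [← main, mul_assoc]
        _ = y * (1 + t * x) := by rw [← mul_assoc, Units.inv_mul, one_mul]
    simpa [ht] using goal1
  · -- ε = -1
    have hxy : t ^ 2 * (x * y) = y * x := by
      have h2 : (s ^ (2 * (-1:ℤ)) : Aˣ) = ((s ^ (2:ℕ))⁻¹ : Aˣ) := by
        group
      rw [hcomm, h2, ← mul_assoc]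
      have h3 : t ^ 2 = ((s ^ (2:ℕ) : Aˣ) : A) := by
        rw [ht, Units.val_pow_eq_pow_val]
      rw [h3, Units.mul_inv, one_mul]
    have key : ∀ n : ℕ, (1 + t ^ (2 * n + 3) * x) * y = y * (1 + t ^ (2 * n + 1) * x) := by
      intro n
      have h1 : t ^ (2 * n + 3) * (x * y) = y * (t ^ (2 * n + 1) * x) := by
        have : (2 : ℕ) * n + 3 = (2 * n + 1) + 2 := by ring
        rw [this, pow_add, mul_assoc, hxy, ← mul_assoc, hc (2 * n + 1) y, mul_assoc]
      calc (1 + t ^ (2 * n + 3) * x) * y = y + t ^ (2 * n + 3) * (x * y) := by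
            rw [add_mul, one_mul, mul_assoc]
        _ = y * (1 + t ^ (2 * n + 1) * x) := by rw [h1, mul_add, mul_one]
    have base : (1 + t * x) * y = y * (1 + ((s⁻¹ : Aˣ) : A) * x) := by
      have h1 : t * (x * y) = y * (((s⁻¹ : Aˣ) : A) * x) := by
        have h2 : t * (x * y) = ((s⁻¹ : Aˣ) : A) * (t ^ 2 * (x * y)) := by
          rw [pow_two, mul_assoc t t, ← mul_assoc ((s⁻¹ : Aˣ) : A)]
          rw [show ((s⁻¹ : Aˣ) : A) * t = 1 from Units.inv_mul s, one_mul]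
        rw [h2, hxy, ← mul_assoc, ((hs_central y).units_inv_left).eq, mul_assoc]
      rw [add_mul, one_mul, mul_assoc, h1, mul_add, mul_one, add_comm]
    have claim : ∀ N : ℕ, Pn (N + 1) * y = y * ((1 + ((s⁻¹ : Aˣ) : A) * x) * Pn N) := by
      intro N
      induction N with
      | zero =>
        have h0 : Pn 0 = 1 := by simp [hPn]
        rw [hPsucc 0, hfn 0, pow_one, h0, one_mul, mul_one, base]
      | succ N ih =>
        rw [hPsucc (N + 1)]
        have h3 : 2 * (N + 1) + 1 = 2 * N + 3 := by ring
        rw [hfn (N + 1), h3]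
        calc Pn (N + 1) * (1 + t ^ (2 * N + 3) * x) * y
            = Pn (N + 1) * (y * (1 + t ^ (2 * N + 1) * x)) := by
              rw [mul_assoc, key N]
          _ = y * ((1 + ((s⁻¹ : Aˣ) : A) * x) * Pn N) * (1 + t ^ (2 * N + 1) * x) := by
              rw [← mul_assoc, ih]
          _ = y * ((1 + ((s⁻¹ : Aˣ) : A) * x) * Pn (N + 1)) := by
              rw [hPsucc N, hfn N, mul_assoc, mul_assoc]
    have lim1 : Tendsto (fun N => Pn (N + 1) * y) atTop (nhds ((P : A) * y)) :=
      (hP.comp (tendsto_add_atTop_nat 1)).mul_const y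
    have lim2 : Tendsto (fun N => y * ((1 + ((s⁻¹ : Aˣ) : A) * x) * Pn N)) atTop
        (nhds (y * ((1 + ((s⁻¹ : Aˣ) : A) * x) * (P : A)))) :=
      (hP.const_mul _).const_mul y
    have main : (P : A) * y = y * ((1 + ((s⁻¹ : Aˣ) : A) * x) * (P : A)) :=
      tendsto_nhds_unique (lim1.congr fun N => claim N) lim2
    have goal2 : (P : A) * y * ((P⁻¹ : Aˣ) : A) = y * (1 + ((s⁻¹ : Aˣ) : A) * x) := by
      rw [main, mul_assoc y, mul_assoc, Units.mul_inv, mul_one]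
    simpa using goal2
end

section
/- Let E be a finite-dimensional representation of a finite quiver Q over C such that Tr_E(σ) = 0 for every cyclic path σ of positive length in Q. Then E is nilpotent, i.e. every path of length at least ∑_i dim E_i acts by zero on E. -/
open Module LinearMap Set

attribute [local instance 100] LieRing.ofAssociativeRing

/-- The linear map `V i →ₗ[ℂ] V j` induced by a path `p : i ⟶ j` in the quiver,
for a representation given by linear maps `f e` attached to the arrows `e`. -/
def pathMap {I : Type*} [Quiver I] (V : I → Type*)
    [∀ i, AddCommGroup (V i)] [∀ i, Module ℂ (V i)]
    (f : ∀ ⦃i j : I⦄, (i ⟶ j) → (V i →ₗ[ℂ] V j)) :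
    ∀ {i j : I}, Quiver.Path i j → (V i →ₗ[ℂ] V j)
  | _, _, Quiver.Path.nil => LinearMap.id
  | _, _, Quiver.Path.cons p e => (f e).comp (pathMap V f p)

lemma pathMap_comp {I : Type*} [Quiver I] (V : I → Type*)
    [∀ i, AddCommGroup (V i)] [∀ i, Module ℂ (V i)]
    (f : ∀ ⦃i j : I⦄, (i ⟶ j) → (V i →ₗ[ℂ] V j)) {i j l : I}
    (p : Quiver.Path i j) (q : Quiver.Path j l) :
    pathMap V f (p.comp q) = (pathMap V f q).comp (pathMap V f p) := by
  induction q with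
  | nil => simp [Quiver.Path.comp_nil, pathMap]
  | cons q e ih =>
    have h1 : pathMap V f (p.comp (q.cons e)) = (f e).comp (pathMap V f (p.comp q)) := by
      rw [Quiver.Path.comp_cons]; simp [pathMap]
    have h2 : pathMap V f (q.cons e) = (f e).comp (pathMap V f q) := by simp [pathMap]
    rw [h1, h2, ih, LinearMap.comp_assoc]



lemma aux_trace_restrict_pow {M : Type*} [AddCommGroup M] [Module ℂ M]
    [FiniteDimensional ℂ M] (f : Module.End ℂ M) (μ : ℂ) (n : ℕ)
    (hm : Set.MapsTo (f ^ n) (f.maxGenEigenspace μ) (f.maxGenEigenspace μ)) :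
    LinearMap.trace ℂ _ ((f ^ n).restrict hm) =
      (finrank ℂ (f.maxGenEigenspace μ) : ℂ) * μ ^ n := by
  have hm1 : Set.MapsTo f (f.maxGenEigenspace μ) (f.maxGenEigenspace μ) :=
    Module.End.mapsTo_maxGenEigenspace_of_comm rfl μ
  set g : Module.End ℂ (f.maxGenEigenspace μ) := f.restrict hm1 with hg
  have hres : (f ^ n).restrict hm = g ^ n := (Module.End.pow_restrict n hm1).symm
  rw [hres]
  set N : Module.End ℂ (f.maxGenEigenspace μ) := g - algebraMap ℂ _ μ with hN
  have hNnil : IsNilpotent N := by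
    have h' : Set.MapsTo (f - algebraMap ℂ (Module.End ℂ M) μ)
        (f.maxGenEigenspace μ) (f.maxGenEigenspace μ) :=
      Module.End.mapsTo_maxGenEigenspace_of_comm
        (Algebra.mul_sub_algebraMap_commutes f μ) μ
    have h2 := f.isNilpotent_restrict_maxGenEigenspace_sub_algebraMap μ h'
    convert h2 using 1
    ext x; rfl
  have hga : Commute (algebraMap ℂ (Module.End ℂ (f.maxGenEigenspace μ)) μ) g :=
    (Algebra.commutes μ g : _)
  have hgN : Commute g N := Commute.sub_right (Commute.refl g) hga.symm
  have haN : Commute (algebraMap ℂ (Module.End ℂ (f.maxGenEigenspace μ)) μ) N :=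
    Commute.sub_right hga (Commute.refl _)
  have hfact : g ^ n - (algebraMap ℂ _ μ) ^ n =
      (∑ i ∈ Finset.range n, g ^ i * (algebraMap ℂ _ μ) ^ (n - 1 - i)) * N := by
    simpa [hN] using (hga.symm.geom_sum₂_mul n).symm
  have hCN : Commute (∑ i ∈ Finset.range n, g ^ i * (algebraMap ℂ _ μ) ^ (n - 1 - i)) N :=
    Commute.sum_left _ _ _ fun i _ => Commute.mul_left (hgN.pow_left i) (haN.pow_left _)
  have htr0 : LinearMap.trace ℂ _ ((∑ i ∈ Finset.range n, g ^ i *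
      (algebraMap ℂ _ μ) ^ (n - 1 - i)) * N) = 0 :=
    (LinearMap.isNilpotent_trace_of_isNilpotent (hCN.isNilpotent_mul_left hNnil)).eq_zero
  have hgn : g ^ n = (algebraMap ℂ _ μ) ^ n + (∑ i ∈ Finset.range n, g ^ i *
      (algebraMap ℂ _ μ) ^ (n - 1 - i)) * N := by
    rw [← hfact]; abel
  rw [hgn, map_add, htr0, add_zero, ← map_pow]
  rw [show (algebraMap ℂ (Module.End ℂ (f.maxGenEigenspace μ)) (μ ^ n)) =
    (μ ^ n) • (1 : Module.End ℂ (f.maxGenEigenspace μ)) from rfl]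
  rw [map_smul, LinearMap.trace_one, smul_eq_mul]
  ring

lemma aux_isNilpotent_of_trace_pow {M : Type*} [AddCommGroup M] [Module ℂ M]
    [FiniteDimensional ℂ M] (f : Module.End ℂ M)
    (h : ∀ n : ℕ, 0 < n → LinearMap.trace ℂ M (f ^ n) = 0) : IsNilpotent f := by
  classical
  have hind := f.independent_maxGenEigenspace
  have htop := Module.End.iSup_maxGenEigenspace_eq_top f
  have hds : DirectSum.IsInternal (fun μ : ℂ => f.maxGenEigenspace μ) :=
    DirectSum.isInternal_submodule_of_iSupIndep_of_iSup_eq_top hind htop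
  have hfin : {μ : ℂ | f.maxGenEigenspace μ ≠ ⊥}.Finite :=
    WellFoundedGT.finite_ne_bot_of_iSupIndep hind
  have hmaps : ∀ (n : ℕ) (μ : ℂ),
      Set.MapsTo (f ^ n) (f.maxGenEigenspace μ) (f.maxGenEigenspace μ) :=
    fun n μ => Module.End.mapsTo_maxGenEigenspace_of_comm (Commute.pow_right rfl n) μ
  set s := hfin.toFinset with hs
  have hsum : ∀ n : ℕ, 0 < n →
      ∑ μ ∈ s, (finrank ℂ (f.maxGenEigenspace μ) : ℂ) * μ ^ n = 0 := by
    intro n hn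
    have h1 := LinearMap.trace_eq_sum_trace_restrict' hds hfin (hmaps n)
    rw [h n hn] at h1
    exact Eq.trans (Finset.sum_congr rfl fun μ _ =>
      (aux_trace_restrict_pow f μ n (hmaps n μ)).symm) h1.symm
  have hzero : ∀ μ : ℂ, μ ≠ 0 → f.maxGenEigenspace μ = ⊥ := by
    intro μ₀ hμ₀
    by_contra hbot
    set t := s.filter (fun μ : ℂ => μ ≠ 0) with ht
    have hμ₀t : μ₀ ∈ t := by simp [ht, hs, hμ₀, hbot]
    have hsum' : ∀ n : ℕ, ∑ μ ∈ t,
        ((finrank ℂ (f.maxGenEigenspace μ) : ℂ) * μ) * μ ^ n = 0 := by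
      intro n
      have h1 := hsum (n + 1) (Nat.succ_pos n)
      have hfil : ∀ x ∈ s, (finrank ℂ (f.maxGenEigenspace x) : ℂ) * x ^ (n + 1) ≠ 0 →
          x ≠ 0 := fun x _ hne h0 => hne (by rw [h0]; simp)
      have h2 : ∑ μ ∈ t, (finrank ℂ (f.maxGenEigenspace μ) : ℂ) * μ ^ (n + 1) = 0 := by
        rw [ht, Finset.sum_filter_of_ne hfil]
        exact h1
      rw [← h2]
      exact Finset.sum_congr rfl fun μ _ => by ring
    have li := linearIndependent_monoidHom (Multiplicative ℕ) ℂ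
    set ι : {μ // μ ∈ t} → (Multiplicative ℕ →* ℂ) :=
      fun μ => powersHom ℂ (μ : ℂ) with hι
    have hinj : Function.Injective ι := by
      intro a b hab
      have h1 := DFunLike.congr_fun hab (Multiplicative.ofAdd 1)
      simp only [hι, powersHom_apply, toAdd_ofAdd, pow_one] at h1; exact Subtype.ext h1
    have li2 := li.comp ι hinj
    have key := Fintype.linearIndependent_iff.mp li2
      (fun μ => (finrank ℂ (f.maxGenEigenspace (μ : ℂ)) : ℂ) * μ) ?_ ⟨μ₀, hμ₀t⟩
    · have hd : (finrank ℂ (f.maxGenEigenspace μ₀) : ℂ) ≠ 0 :=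
        Nat.cast_ne_zero.mpr fun h0 => hbot (Submodule.finrank_eq_zero.mp h0)
      exact (mul_ne_zero hd hμ₀) key
    · funext x
      have h3 := hsum' (Multiplicative.toAdd x)
      rw [← Finset.sum_attach t
        (fun μ => ((finrank ℂ (f.maxGenEigenspace μ) : ℂ) * μ) * μ ^ (Multiplicative.toAdd x))]
        at h3
      simpa [Function.comp, hι, Finset.sum_apply, powersHom_apply] using h3
  have h0top : f.maxGenEigenspace 0 = ⊤ := by
    rw [eq_top_iff, ← htop]
    apply iSup_le
    intro μ
    by_cases hμ : μ = 0
    · subst hμ; exact le_rfl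
    · rw [hzero μ hμ]; exact bot_le
  refine ((LinearMap.charpoly_nilpotent_tfae f).out 2 0).mp fun m => ?_
  have hm : m ∈ f.maxGenEigenspace 0 := h0top ▸ Submodule.mem_top
  rw [Module.End.mem_maxGenEigenspace] at hm
  obtain ⟨k, hk⟩ := hm
  exact ⟨k, by simpa using hk⟩

/-- Let `E = (V, f)` be a finite-dimensional representation of a finite
quiver `Q` over `ℂ` such that `Tr_E(σ) = 0` for every cyclic path `σ` of positive
length.  Then `E` is nilpotent: every path of length at least `∑ᵢ dim Eᵢ` acts by
zero on `E`. -/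
theorem trace_zero_on_cycles_implies_nilpotent
    {I : Type*} [Quiver I] [Fintype I] [∀ i j : I, Fintype (i ⟶ j)]
    (V : I → Type*) [∀ i, AddCommGroup (V i)] [∀ i, Module ℂ (V i)]
    [∀ i, FiniteDimensional ℂ (V i)]
    (f : ∀ ⦃i j : I⦄, (i ⟶ j) → (V i →ₗ[ℂ] V j))
    (htr : ∀ (i : I) (p : Quiver.Path i i), 0 < p.length →
      LinearMap.trace ℂ (V i) (pathMap V f p) = 0) :
    ∀ (i j : I) (p : Quiver.Path i j),
      (∑ k : I, Module.finrank ℂ (V k)) ≤ p.length → pathMap V f p = 0 := by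
  classical
  intro i j p hlen
  set W : Type _ := ∀ k, V k with hW
  let Φ : ∀ {a b : I}, Quiver.Path a b → Module.End ℂ W :=
    fun {a b} q => (LinearMap.single ℂ V b) ∘ₗ (pathMap V f q) ∘ₗ (LinearMap.proj a)
  -- composition of path maps on W
  have hΦcomp : ∀ {a b c : I} (q : Quiver.Path a b) (r : Quiver.Path b c),
      Φ (q.comp r) = Φ r * Φ q := by
    intro a b c q r
    refine LinearMap.ext fun w => ?_
    show LinearMap.single ℂ V c (pathMap V f (q.comp r) (w a)) =
      LinearMap.single ℂ V c (pathMap V f r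
        ((LinearMap.single ℂ V b (pathMap V f q (w a))) b))
    rw [pathMap_comp]
    simp [Pi.single_eq_same]
  have hΦcons : ∀ {a b c : I} (q : Quiver.Path a b) (e : b ⟶ c),
      Φ (q.cons e) = Φ e.toPath * Φ q := by
    intro a b c q e
    have : q.cons e = q.comp e.toPath := rfl
    rw [this, hΦcomp]
  -- span of positive length path maps
  set genSet : Set (Module.End ℂ W) :=
    {x | ∃ (a b : I) (q : Quiver.Path a b), 0 < q.length ∧ Φ q = x} with hgen
  set S : Submodule ℂ (Module.End ℂ W) := Submodule.span ℂ genSet with hS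
  have hmulgen : ∀ x ∈ genSet, ∀ y ∈ genSet, x * y ∈ S := by
    rintro x ⟨a, b, q, hq, rfl⟩ y ⟨a', b', q', hq', rfl⟩
    by_cases hba : b' = a
    · subst hba
      rw [← hΦcomp q' q]
      refine Submodule.subset_span ⟨a', b, q'.comp q, ?_, rfl⟩
      rw [Quiver.Path.length_comp]
      omega
    · have hz : Φ q * Φ q' = 0 := by
        refine LinearMap.ext fun w => ?_
        show LinearMap.single ℂ V b (pathMap V f q
          ((LinearMap.single ℂ V b' (pathMap V f q' (w a'))) a)) = 0
        have ha : ((LinearMap.single ℂ V b') ((pathMap V f q') (w a'))) a = 0 :=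
          Pi.single_eq_of_ne (fun h => hba h.symm) _
        rw [ha]
        simp
      rw [hz]
      exact S.zero_mem
  have hmul : ∀ x ∈ S, ∀ y ∈ S, x * y ∈ S := by
    have step1 : ∀ x ∈ genSet, ∀ y ∈ S, x * y ∈ S := by
      intro x hx
      have : S ≤ S.comap (LinearMap.mulLeft ℂ x) :=
        Submodule.span_le.mpr fun y hy => hmulgen x hx y hy
      exact fun y hy => this hy
    intro x hx y hy
    have : S ≤ S.comap (LinearMap.mulRight ℂ y) :=
      Submodule.span_le.mpr fun x' hx' => step1 x' hx' y hy
    exact this hx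
  -- traces vanish on S
  have htrS : ∀ x ∈ S, LinearMap.trace ℂ W x = 0 := by
    have : S ≤ LinearMap.ker (LinearMap.trace ℂ W) := by
      rw [hS, Submodule.span_le]
      rintro x ⟨a, b, q, hq, rfl⟩
      simp only [SetLike.mem_coe, LinearMap.mem_ker]
      have hassoc : Φ q = (LinearMap.single ℂ V b) ∘ₗ
          ((pathMap V f q) ∘ₗ (LinearMap.proj a)) := rfl
      rw [hassoc, LinearMap.trace_comp_comm']
      by_cases hab : a = b
      · subst hab
        rw [LinearMap.comp_assoc, LinearMap.proj_comp_single_same, LinearMap.comp_id]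
        exact htr a q hq
      · rw [LinearMap.comp_assoc, LinearMap.proj_comp_single_ne ℂ V a b hab,
          LinearMap.comp_zero, map_zero]
    exact fun x hx => this hx
  -- every element of S is nilpotent
  have hnil : ∀ x ∈ S, IsNilpotent x := by
    intro x hx
    refine aux_isNilpotent_of_trace_pow x fun n hn => ?_
    have hpow : x ^ n ∈ S := by
      induction n with
      | zero => omega
      | succ n ih =>
        rcases Nat.eq_zero_or_pos n with h0 | h0
        · subst h0; simpa using hx
        · rw [pow_succ]; exact hmul _ (ih h0) _ hx
    exact htrS _ hpow
  -- the Lie subalgebra spanned by positive-length path maps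
  let L : LieSubalgebra ℂ (Module.End ℂ W) :=
    { S with
      lie_mem' := fun {x y} hx hy => by
        rw [Ring.lie_def]
        exact sub_mem (hmul x hx y hy) (hmul y hy x hx) }
  have hLS : ∀ x, x ∈ L ↔ x ∈ S := fun x => Iff.rfl
  haveI : IsNoetherian ℂ L := by
    have : IsNoetherian ℂ S := inferInstance
    exact this
  -- Engel's theorem
  have hnilL : LieModule.IsNilpotent L W := by
    rw [LieModule.isNilpotent_iff_forall (R := ℂ)]
    intro x
    have hx : IsNilpotent (x : Module.End ℂ W) := hnil _ x.2
    have hEq : LieModule.toEnd ℂ L W x = (x : Module.End ℂ W) := by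
      ext m; rfl
    rw [hEq]
    exact hx
  obtain ⟨k0, hk0⟩ := (LieModule.isNilpotent_iff ℂ L W).mp hnilL
  -- stabilization
  have hstab : ∀ n : ℕ, LieModule.lowerCentralSeries ℂ L W (n + 1) = LieModule.lowerCentralSeries ℂ L W n →
      ∀ d : ℕ, LieModule.lowerCentralSeries ℂ L W (n + d) = LieModule.lowerCentralSeries ℂ L W n := by
    intro n h d
    induction d with
    | zero => rfl
    | succ d ih =>
      have : n + (d + 1) = (n + d) + 1 := rfl
      rw [this, LieModule.lowerCentralSeries_succ, ih,
        ← LieModule.lowerCentralSeries_succ, h]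
  -- dimension bound
  have hbdd : ∀ n : ℕ, LieModule.lowerCentralSeries ℂ L W n = ⊥ ∨
      finrank ℂ ((LieModule.lowerCentralSeries ℂ L W n : Submodule ℂ W)) + n ≤ finrank ℂ W := by
    intro n
    induction n with
    | zero =>
      right
      rw [LieModule.lowerCentralSeries_zero, LieSubmodule.top_toSubmodule,
        finrank_top, Nat.add_zero]
    | succ n ih =>
      rcases ih with h | h
      · left
        exact le_bot_iff.mp (h ▸ LieModule.antitone_lowerCentralSeries ℂ L W (Nat.le_succ n))
      · by_cases he : LieModule.lowerCentralSeries ℂ L W (n + 1) = LieModule.lowerCentralSeries ℂ L W n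
        · left
          have h1 := hstab n he k0
          have h2 : LieModule.lowerCentralSeries ℂ L W (n + k0) ≤ LieModule.lowerCentralSeries ℂ L W k0 :=
            LieModule.antitone_lowerCentralSeries ℂ L W (Nat.le_add_left k0 n)
          rw [hk0, le_bot_iff, h1] at h2
          rw [he, h2]
        · right
          have hle : LieModule.lowerCentralSeries ℂ L W (n + 1) ≤ LieModule.lowerCentralSeries ℂ L W n :=
            LieModule.antitone_lowerCentralSeries ℂ L W (Nat.le_succ n)
          have hlt : ((LieModule.lowerCentralSeries ℂ L W (n + 1) : Submodule ℂ W)) <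
              ((LieModule.lowerCentralSeries ℂ L W n : Submodule ℂ W)) := by
            refine lt_of_le_of_ne ((LieSubmodule.toSubmodule_le_toSubmodule _ _).mpr hle)
              fun hc => he (LieSubmodule.toSubmodule_injective hc)
          have := Submodule.finrank_lt_finrank_of_lt hlt
          omega
  -- the lower central series vanishes at finrank W
  have hNbot : LieModule.lowerCentralSeries ℂ L W (finrank ℂ W) = ⊥ := by
    rcases hbdd (finrank ℂ W) with h | h
    · exact h
    · have h0 : finrank ℂ ((LieModule.lowerCentralSeries ℂ L W (finrank ℂ W) : Submodule ℂ W)) = 0 := by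
        omega
      have := Submodule.finrank_eq_zero.mp h0
      exact LieSubmodule.toSubmodule_injective
        (by rw [this, LieSubmodule.bot_toSubmodule])
  -- membership of iterated images in the lower central series
  have hmem : ∀ {a b : I} (q : Quiver.Path a b) (w : W),
      Φ q w ∈ LieModule.lowerCentralSeries ℂ L W q.length := by
    intro a b q
    induction q with
    | nil =>
      intro w
      simp only [Quiver.Path.length_nil]
      rw [LieModule.lowerCentralSeries_zero]
      exact LieSubmodule.mem_top _
    | cons q e ih =>
      intro w
      have h1 : Φ (q.cons e) w = Φ e.toPath (Φ q w) := by
        rw [hΦcons q e]; rfl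
      have hgen' : Φ e.toPath ∈ L := Submodule.subset_span ⟨_, _, e.toPath, by
        simp [Quiver.Hom.toPath], rfl⟩
      set x : L := ⟨Φ e.toPath, hgen'⟩ with hx
      have h2 : Φ e.toPath (Φ q w) = ⁅x, Φ q w⁆ := rfl
      rw [h1, h2]
      simp only [Quiver.Path.length_cons]
      rw [LieModule.lowerCentralSeries_succ]
      exact LieSubmodule.lie_mem_lie (LieSubmodule.mem_top x) (ih w)
  -- conclude
  have hWrank : finrank ℂ W = ∑ k : I, finrank ℂ (V k) := Module.finrank_pi_fintype ℂ
  have hΦ0 : Φ p = 0 := by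
    refine LinearMap.ext fun w => ?_
    have h1 := hmem p w
    have h2 : LieModule.lowerCentralSeries ℂ L W p.length ≤ LieModule.lowerCentralSeries ℂ L W (finrank ℂ W) :=
      LieModule.antitone_lowerCentralSeries ℂ L W (by omega)
    rw [hNbot] at h2
    simpa using h2 h1
  refine LinearMap.ext fun v => ?_
  have h3 : Φ p (LinearMap.single ℂ V i v) = 0 := by rw [hΦ0]; rfl
  have h4 : Φ p (LinearMap.single ℂ V i v) = LinearMap.single ℂ V j (pathMap V f p v) := by
    show LinearMap.single ℂ V j (pathMap V f p ((LinearMap.single ℂ V i v) i)) = _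
    rw [show ((LinearMap.single ℂ V i v) i) = v from Pi.single_eq_same i v]
  have h5 := congrArg (fun w : W => w j) (h4.symm.trans h3)
  exact (by simpa [Pi.single_eq_same] using h5 : pathMap V f p v = (0 : W) j)
end

section
/- Every nonzero finite-dimensional representation E of a finite quiver Q admits a unique Harder–Narasimhan filtration with respect to a central charge Z: an increasing filtration 0 = E_0 ⊂ E_1 ⊂ ⋯ ⊂ E_n = E such that each subquotient E_i/E_{i−1} is semistable and the slopes φ(E_1) > φ(E_2/E_1) > ⋯ > φ(E_n/E_{n−1}) strictly decrease. -/
section QuiverRep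

variable {I : Type*} [Quiver I] (V : I → Type*)
  [∀ i, AddCommGroup (V i)] [∀ i, Module ℂ (V i)]

/-- A family of subspaces `p i ⊆ V i` is a subrepresentation if it is preserved by
all the structure maps of the representation. -/
def IsSubrep (f : ∀ ⦃i j : I⦄, (i ⟶ j) → (V i →ₗ[ℂ] V j))
    (p : ∀ i, Submodule ℂ (V i)) : Prop :=
  ∀ ⦃i j : I⦄ (e : i ⟶ j), ∀ x ∈ p i, f e x ∈ p j

/-- The dimension vector of the subquotient `q/p` of a nested pair of families of
subspaces `p ≤ q`. -/
noncomputable def dimVecBetween (p q : ∀ i, Submodule ℂ (V i)) : I → ℤ :=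
  fun i => (Module.finrank ℂ (q i) : ℤ) - (Module.finrank ℂ (p i) : ℤ)

/-- The subquotient `q/p` (with `p ≤ q` nested subrepresentations) is semistable
with respect to the central charge `Z`: every nonzero subrepresentation `r/p` of
`q/p` (corresponding to a subrepresentation `p ≤ r ≤ q`) has slope
`Arg Z(dim r/p) ≤ Arg Z(dim q/p)`. -/
def SemistableBetween (f : ∀ ⦃i j : I⦄, (i ⟶ j) → (V i →ₗ[ℂ] V j))
    (Z : (I → ℤ) →ₗ[ℤ] ℂ) (p q : ∀ i, Submodule ℂ (V i)) : Prop :=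
  ∀ r : ∀ i, Submodule ℂ (V i), IsSubrep V f r →
    (∀ i, p i ≤ r i) → (∀ i, r i ≤ q i) → r ≠ p →
    Complex.arg (Z (dimVecBetween V p r)) ≤ Complex.arg (Z (dimVecBetween V p q))

/-- `E : ℕ → (∀ i, Submodule ℂ (V i))` (constant equal to `⊤` from index `n` on) is a
Harder–Narasimhan filtration of length `n` of the representation `(V, f)` with
respect to the central charge `Z`: an increasing filtration by subrepresentations
`0 = E 0 ⊆ E 1 ⊆ ⋯ ⊆ E n = V` with semistable subquotients of strictly decreasing
slopes. -/
def IsHNFiltration (f : ∀ ⦃i j : I⦄, (i ⟶ j) → (V i →ₗ[ℂ] V j))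
    (Z : (I → ℤ) →ₗ[ℤ] ℂ) (n : ℕ) (E : ℕ → ∀ i, Submodule ℂ (V i)) : Prop :=
  (∀ k, IsSubrep V f (E k)) ∧
  (E 0 = fun _ => ⊥) ∧
  (∀ k, n ≤ k → E k = fun _ => ⊤) ∧
  (∀ k, k < n → ∀ i, E k i ≤ E (k + 1) i) ∧
  (∀ k, k < n → E k ≠ E (k + 1)) ∧
  (∀ k, k < n → SemistableBetween V f Z (E k) (E (k + 1))) ∧
  (∀ k, k + 1 < n →
    Complex.arg (Z (dimVecBetween V (E (k + 1)) (E (k + 2)))) <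
      Complex.arg (Z (dimVecBetween V (E k) (E (k + 1)))))

end QuiverRep

set_option linter.unusedSectionVars false

open Complex in
lemma hn_arg_le_arg_iff {u v : ℂ} (hu : 0 < u.im) (hv : 0 < v.im) :
    arg u ≤ arg v ↔ 0 ≤ u.re * v.im - u.im * v.re := by
  have hu0 : u ≠ 0 := fun h => by simp [h] at hu
  have hv0 : v ≠ 0 := fun h => by simp [h] at hv
  have hau : 0 < arg u := lt_of_le_of_ne (arg_nonneg_iff.2 hu.le)
    (fun h => by have := arg_eq_zero_iff.1 h.symm; exact hu.ne' this.2)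
  have hav : 0 < arg v := lt_of_le_of_ne (arg_nonneg_iff.2 hv.le)
    (fun h => by have := arg_eq_zero_iff.1 h.symm; exact hv.ne' this.2)
  have hau' : arg u < Real.pi := lt_of_le_of_ne (arg_le_pi u)
    (fun h => hu.ne' (arg_eq_pi_iff.1 h).2)
  have hav' : arg v < Real.pi := lt_of_le_of_ne (arg_le_pi v)
    (fun h => hv.ne' (arg_eq_pi_iff.1 h).2)
  have habs_u : (0:ℝ) < ‖u‖ := norm_pos_iff.mpr hu0
  have habs_v : (0:ℝ) < ‖v‖ := norm_pos_iff.mpr hv0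
  have hre_u : u.re = ‖u‖ * Real.cos (arg u) := by
    rw [cos_arg hu0]; field_simp
  have him_u : u.im = ‖u‖ * Real.sin (arg u) := by
    rw [sin_arg]; field_simp
  have hre_v : v.re = ‖v‖ * Real.cos (arg v) := by
    rw [cos_arg hv0]; field_simp
  have him_v : v.im = ‖v‖ * Real.sin (arg v) := by
    rw [sin_arg]; field_simp
  have key : u.re * v.im - u.im * v.re
      = (‖u‖ * ‖v‖) * Real.sin (arg v - arg u) := by
    rw [hre_u, him_u, hre_v, him_v, Real.sin_sub]; ring
  rw [key]
  constructor
  · intro h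
    have : 0 ≤ Real.sin (arg v - arg u) := Real.sin_nonneg_of_nonneg_of_le_pi
      (by linarith) (by linarith)
    positivity
  · intro h
    by_contra hlt
    push_neg at hlt
    have : Real.sin (arg v - arg u) < 0 :=
      Real.sin_neg_of_neg_of_neg_pi_lt (by linarith) (by linarith)
    nlinarith [mul_pos habs_u habs_v]

open Complex in
lemma hn_arg_lt_arg_iff {u v : ℂ} (hu : 0 < u.im) (hv : 0 < v.im) :
    arg u < arg v ↔ 0 < u.re * v.im - u.im * v.re := by
  rw [← not_le, hn_arg_le_arg_iff hv hu, not_le]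
  constructor <;> intro h <;> linarith

namespace HNAux

variable {I : Type*} [Quiver I] [Fintype I] [DecidableEq I]
  (V : I → Type*) [∀ i, AddCommGroup (V i)] [∀ i, Module ℂ (V i)]
  [∀ i, FiniteDimensional ℂ (V i)]

/-- dimension vector -/
noncomputable def dv (p : ∀ i, Submodule ℂ (V i)) : I → ℤ :=
  fun i => (Module.finrank ℂ (p i) : ℤ)

variable (Z : (I → ℤ) →ₗ[ℤ] ℂ)

noncomputable def zv (p : ∀ i, Submodule ℂ (V i)) : ℂ := Z (dv V p)

noncomputable def sl (p q : ∀ i, Submodule ℂ (V i)) : ℝ :=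
  Complex.arg (zv V Z q - zv V Z p)

noncomputable def rk (p : ∀ i, Submodule ℂ (V i)) : ℕ :=
  ∑ i, Module.finrank ℂ (p i)

lemma dimVecBetween_eq (p q : ∀ i, Submodule ℂ (V i)) :
    dimVecBetween V p q = dv V q - dv V p := rfl

lemma Z_dimVecBetween (p q : ∀ i, Submodule ℂ (V i)) :
    Z (dimVecBetween V p q) = zv V Z q - zv V Z p := by
  rw [dimVecBetween_eq, map_sub]; rfl

lemma sl_eq (p q : ∀ i, Submodule ℂ (V i)) :
    Complex.arg (Z (dimVecBetween V p q)) = sl V Z p q := by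
  rw [Z_dimVecBetween]; rfl

variable {V Z}

lemma Z_im_pos (hZ : ∀ i : I, 0 < (Z (Pi.single i 1)).im) {m : I → ℤ}
    (hm : ∀ i, 0 ≤ m i) (hm0 : m ≠ 0) : 0 < (Z m).im := by
  have hrep : m = ∑ i, Pi.single i (m i) := by
    simp [Finset.univ_sum_single]
  have h1 : Z m = ∑ i, (m i) • Z (Pi.single i 1) := by
    rw [hrep, map_sum]
    congr 1; funext i
    rw [← map_smul]
    congr 1
    ext j
    by_cases h : j = i <;> simp [Pi.single_apply, h]
  rw [h1, Complex.im_sum]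
  have hterm : ∀ i, ((m i) • Z (Pi.single i 1)).im = (m i : ℝ) * (Z (Pi.single i 1)).im := by
    intro i
    rw [zsmul_eq_mul]
    simp [Complex.mul_im]
  obtain ⟨i₀, hi₀⟩ : ∃ i, m i ≠ 0 := by
    by_contra h; push_neg at h; exact hm0 (funext h)
  apply Finset.sum_pos' (fun i _ => by
    rw [hterm]; exact mul_nonneg (by exact_mod_cast hm i) (hZ i).le)
  refine ⟨i₀, Finset.mem_univ _, ?_⟩
  rw [hterm]
  exact mul_pos (by exact_mod_cast lt_of_le_of_ne (hm i₀) (Ne.symm hi₀)) (hZ i₀)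

lemma dv_mono {p q : ∀ i, Submodule ℂ (V i)} (h : p ≤ q) (i : I) :
    dv V p i ≤ dv V q i := by
  simp only [dv]
  exact_mod_cast Submodule.finrank_mono (h i)

lemma eq_of_le_of_dv_eq {p q : ∀ i, Submodule ℂ (V i)} (h : p ≤ q)
    (hd : ∀ i, dv V p i = dv V q i) : p = q := by
  funext i
  refine Submodule.eq_of_le_of_finrank_eq (h i) ?_
  have := hd i
  simp only [dv] at this
  exact_mod_cast this

lemma im_pos_of_lt (hZ : ∀ i : I, 0 < (Z (Pi.single i 1)).im)
    {p q : ∀ i, Submodule ℂ (V i)} (h : p ≤ q) (hne : p ≠ q) :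
    0 < (zv V Z q - zv V Z p).im := by
  have : zv V Z q - zv V Z p = Z (dv V q - dv V p) := by
    rw [map_sub]; rfl
  rw [this]
  apply Z_im_pos hZ
  · intro i; simp only [Pi.sub_apply]; linarith [dv_mono h i]
  · intro h0
    apply hne
    apply eq_of_le_of_dv_eq h
    intro i
    have := congrFun h0 i
    simp only [Pi.sub_apply, Pi.zero_apply] at this
    linarith

lemma rk_mono {p q : ∀ i, Submodule ℂ (V i)} (h : p ≤ q) : rk V p ≤ rk V q :=
  Finset.sum_le_sum fun i _ => Submodule.finrank_mono (h i)

lemma rk_lt {p q : ∀ i, Submodule ℂ (V i)} (h : p ≤ q) (hne : p ≠ q) :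
    rk V p < rk V q := by
  by_contra hle
  push_neg at hle
  apply hne
  apply eq_of_le_of_dv_eq h
  intro i
  have h1 : ∀ i, Module.finrank ℂ (p i) ≤ Module.finrank ℂ (q i) :=
    fun i => Submodule.finrank_mono (h i)
  have : ∀ i ∈ Finset.univ, Module.finrank ℂ (q i) ≤ Module.finrank ℂ (p i) := by
    by_contra hc
    push_neg at hc
    obtain ⟨j, _, hj⟩ := hc
    have : rk V p < rk V q :=
      Finset.sum_lt_sum (fun i _ => h1 i) ⟨j, Finset.mem_univ _, hj⟩
    omega
  have := this i (Finset.mem_univ i)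
  simp only [dv]
  exact_mod_cast le_antisymm (h1 i) this

lemma eq_of_le_of_rk_le {p q : ∀ i, Submodule ℂ (V i)} (h : p ≤ q)
    (hr : rk V q ≤ rk V p) : p = q := by
  by_contra hne
  exact absurd hr (not_le.2 (rk_lt h hne))

lemma zv_modular (p q : ∀ i, Submodule ℂ (V i)) :
    zv V Z (p ⊔ q) + zv V Z (p ⊓ q) = zv V Z p + zv V Z q := by
  unfold zv
  rw [← map_add, ← map_add]
  congr 1
  funext i
  simp only [Pi.add_apply, dv, Pi.sup_apply, Pi.inf_apply]
  have := Submodule.finrank_sup_add_finrank_inf_eq (p i) (q i)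
  exact_mod_cast this

end HNAux

namespace HNAux2

variable {I : Type*} [Quiver I] [Fintype I] [DecidableEq I]
  {V : I → Type*} [∀ i, AddCommGroup (V i)] [∀ i, Module ℂ (V i)]
  [∀ i, FiniteDimensional ℂ (V i)]
  {f : ∀ ⦃i j : I⦄, (i ⟶ j) → (V i →ₗ[ℂ] V j)}
  {Z : (I → ℤ) →ₗ[ℤ] ℂ}

open HNAux

lemma isSubrep_bot : IsSubrep V f (⊥ : ∀ i, Submodule ℂ (V i)) := by
  intro i j e x hx
  simp only [Pi.bot_apply, Submodule.mem_bot] at hx ⊢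
  simp [hx]

lemma isSubrep_top : IsSubrep V f (⊤ : ∀ i, Submodule ℂ (V i)) := by
  intro i j e x _; trivial

lemma isSubrep_inf {p q : ∀ i, Submodule ℂ (V i)} (hp : IsSubrep V f p)
    (hq : IsSubrep V f q) : IsSubrep V f (p ⊓ q) := by
  intro i j e x hx
  simp only [Pi.inf_apply, Submodule.mem_inf] at hx ⊢
  exact ⟨hp e x hx.1, hq e x hx.2⟩

lemma isSubrep_sup {p q : ∀ i, Submodule ℂ (V i)} (hp : IsSubrep V f p)
    (hq : IsSubrep V f q) : IsSubrep V f (p ⊔ q) := by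
  intro i j e x hx
  simp only [Pi.sup_apply] at hx ⊢
  obtain ⟨y, hy, z, hz, rfl⟩ := Submodule.mem_sup.1 hx
  rw [map_add]
  exact Submodule.add_mem_sup (hp e y hy) (hq e z hz)

/-- relative HN filtration starting from `p` -/
def RelHN (V : I → Type*) [∀ i, AddCommGroup (V i)] [∀ i, Module ℂ (V i)]
    (f : ∀ ⦃i j : I⦄, (i ⟶ j) → (V i →ₗ[ℂ] V j)) (Z : (I → ℤ) →ₗ[ℤ] ℂ)
    (p : ∀ i, Submodule ℂ (V i)) (n : ℕ) (E : ℕ → ∀ i, Submodule ℂ (V i)) : Prop :=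
  (∀ k, IsSubrep V f (E k)) ∧
  (E 0 = p) ∧
  (∀ k, n ≤ k → E k = ⊤) ∧
  (∀ k, k < n → E k ≤ E (k + 1)) ∧
  (∀ k, k < n → E k ≠ E (k + 1)) ∧
  (∀ k, k < n → SemistableBetween V f Z (E k) (E (k + 1))) ∧
  (∀ k, k + 1 < n → sl V Z (E (k + 1)) (E (k + 2)) < sl V Z (E k) (E (k + 1)))

variable [∀ i, FiniteDimensional ℂ (V i)]

lemma isHN_iff_relHN (n : ℕ) (E : ℕ → ∀ i, Submodule ℂ (V i)) :
    IsHNFiltration V f Z n E ↔ RelHN V f Z ⊥ n E := by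
  have hb : (fun _ => ⊥ : ∀ i, Submodule ℂ (V i)) = ⊥ := rfl
  have ht : (fun _ => ⊤ : ∀ i, Submodule ℂ (V i)) = ⊤ := rfl
  unfold IsHNFiltration RelHN
  rw [hb, ht]
  refine and_congr Iff.rfl (and_congr Iff.rfl (and_congr Iff.rfl
    (and_congr Iff.rfl (and_congr Iff.rfl (and_congr Iff.rfl ?_)))))
  constructor <;> intro h k hk <;> have := h k hk <;>
    simpa only [sl_eq] using this

end HNAux2

namespace HNAux2

section Main

variable {I : Type*} [Quiver I] [Fintype I] [DecidableEq I]
  {V : I → Type*} [∀ i, AddCommGroup (V i)] [∀ i, Module ℂ (V i)]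
  [∀ i, FiniteDimensional ℂ (V i)]
  {f : ∀ ⦃i j : I⦄, (i ⟶ j) → (V i →ₗ[ℂ] V j)}
  {Z : (I → ℤ) →ₗ[ℤ] ℂ}

open HNAux

/-- existence of a greatest maximal destabilizing subrepresentation above `p` -/
lemma exists_mdest (hZ : ∀ i : I, 0 < (Z (Pi.single i 1)).im)
    {p : ∀ i, Submodule ℂ (V i)} (hp : IsSubrep V f p) (hptop : p ≠ ⊤) :
    ∃ q, IsSubrep V f q ∧ p ≤ q ∧ p ≠ q ∧
      (∀ r, IsSubrep V f r → p ≤ r → p ≠ r → sl V Z p r ≤ sl V Z p q) ∧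
      (∀ r, IsSubrep V f r → p ≤ r → p ≠ r → sl V Z p q ≤ sl V Z p r → r ≤ q) := by
  classical
  -- the set of achievable slopes is finite
  set A : Set ℝ := {a | ∃ q, IsSubrep V f q ∧ p ≤ q ∧ p ≠ q ∧ sl V Z p q = a} with hA
  have hAfin : A.Finite := by
    have hsub : A ⊆ (fun m : I → ℤ => Complex.arg (Z m - zv V Z p)) ''
        (Set.univ.pi fun i => Set.Icc (0 : ℤ) (Module.finrank ℂ (V i))) := by
      rintro a ⟨q, _, _, _, rfl⟩
      refine ⟨dv V q, ?_, rfl⟩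
      intro i _
      refine ⟨Int.natCast_nonneg _, ?_⟩
      simp only [dv]
      exact_mod_cast Submodule.finrank_le (q i)
    exact Set.Finite.subset (Set.Finite.image _
      (Set.Finite.pi fun i => Set.finite_Icc _ _)) hsub
  have hAne : A.Nonempty := ⟨sl V Z p ⊤, ⊤, isSubrep_top, le_top, hptop, rfl⟩
  obtain ⟨μ, hμA, hμmax⟩ := Set.exists_max_image A id hAfin hAne
  -- the set of maximizers, and one of maximal rank
  set M : Set (∀ i, Submodule ℂ (V i)) :=
    {q | IsSubrep V f q ∧ p ≤ q ∧ p ≠ q ∧ sl V Z p q = μ} with hM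
  obtain ⟨q₀, hq₀⟩ : M.Nonempty := by
    obtain ⟨q, hq1, hq2, hq3, hq4⟩ := hμA
    exact ⟨q, hq1, hq2, hq3, hq4⟩
  -- ranks of maximizers form a finite nonempty set
  have hrkfin : (rk V '' M).Finite :=
    Set.Finite.subset (Set.finite_Icc 0 (rk V (⊤ : ∀ i, Submodule ℂ (V i))))
      (by rintro _ ⟨q, hq, rfl⟩; exact ⟨Nat.zero_le _, rk_mono le_top⟩)
  obtain ⟨b, hbmem, hbmax⟩ := Set.exists_max_image (rk V '' M) id hrkfin ⟨_, q₀, hq₀, rfl⟩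
  obtain ⟨q, hqM, rfl⟩ := hbmem
  obtain ⟨hq1, hq2, hq3, hq4⟩ := hqM
  have imu : ∀ {r : ∀ i, Submodule ℂ (V i)}, p ≤ r → p ≠ r →
      0 < (zv V Z r - zv V Z p).im := fun h hne => im_pos_of_lt hZ h hne
  -- key: every maximizer is ≤ q
  have hmax_le : ∀ r, r ∈ M → r ≤ q := by
    intro r hr
    obtain ⟨hr1, hr2, hr3, hr4⟩ := hr
    set u : ℂ := zv V Z r - zv V Z p with hu
    set v : ℂ := zv V Z q - zv V Z p with hv
    have hui : 0 < u.im := imu hr2 hr3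
    have hvi : 0 < v.im := imu hq2 hq3
    have hargu : Complex.arg u = μ := hr4
    have hargv : Complex.arg v = μ := hq4
    -- the sup is also a maximizer
    have hps : p ≤ r ⊔ q := le_trans hq2 le_sup_right
    have hpsne : p ≠ r ⊔ q := by
      intro h
      exact hq3 (le_antisymm hq2 (le_sup_right.trans h.ge))
    have hsup_mem : r ⊔ q ∈ M := by
      refine ⟨isSubrep_sup hr1 hq1, hps, hpsne, ?_⟩
      have hsl_le : sl V Z p (r ⊔ q) ≤ μ :=
        hμmax _ ⟨r ⊔ q, isSubrep_sup hr1 hq1, hps, hpsne, rfl⟩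
      refine le_antisymm hsl_le ?_
      -- zv (r ⊔ q) - zv p = u + v - w  where w = zv (r ⊓ q) - zv p
      set w : ℂ := zv V Z (r ⊓ q) - zv V Z p with hw
      have hmod : zv V Z (r ⊔ q) - zv V Z p = u + v - w := by
        have := zv_modular (V := V) (Z := Z) r q
        rw [hu, hv, hw]; ring_nf; linear_combination this
      have hsv : 0 < (zv V Z (r ⊔ q) - zv V Z p).im := imu hps hpsne
      by_cases hcase : p = r ⊓ q
      · -- w = 0
        have hw0 : w = 0 := by rw [hw, ← hcase]; ring
        have heq : zv V Z (r ⊔ q) - zv V Z p = u + v := by rw [hmod, hw0]; ring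
        have hcross : 0 ≤ u.re * v.im - u.im * v.re := by
          have h1 := (hn_arg_le_arg_iff hui hvi).1 (by rw [hargu, hargv])
          linarith
        have : Complex.arg u ≤ Complex.arg (u + v) := by
          rw [hn_arg_le_arg_iff hui (by simpa using add_pos hui hvi)]
          simp only [Complex.add_re, Complex.add_im]
          nlinarith
        calc μ = Complex.arg u := hargu.symm
          _ ≤ _ := by rw [sl]; rw [heq]; exact this
      · have hple : p ≤ r ⊓ q := le_inf hr2 hq2
        have hwi : 0 < w.im := imu hple hcase
        have hargw : Complex.arg w ≤ μ :=
          hμmax _ ⟨r ⊓ q, isSubrep_inf hr1 hq1, hple, hcase, rfl⟩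
        -- arg w ≤ arg (u+v) = μ hence arg (u+v-w) ≥ μ
        have huvi : 0 < (u + v).im := by simpa using add_pos hui hvi
        have harguv : Complex.arg u ≤ Complex.arg (u + v) ∧
            Complex.arg (u + v) ≤ Complex.arg u := by
          have hcross : u.re * v.im - u.im * v.re = 0 := by
            have h1 := (hn_arg_le_arg_iff hui hvi).1 (by rw [hargu, hargv])
            have h2 := (hn_arg_le_arg_iff hvi hui).1 (by rw [hargu, hargv])
            linarith
          constructor
          · rw [hn_arg_le_arg_iff hui huvi]
            simp only [Complex.add_re, Complex.add_im]; nlinarith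
          · rw [hn_arg_le_arg_iff huvi hui]
            simp only [Complex.add_re, Complex.add_im]; nlinarith
        have harguv' : Complex.arg (u + v) = μ := le_antisymm
          (harguv.2.trans_eq hargu) (hargu ▸ harguv.1)
        have hwc : 0 ≤ w.re * (u+v).im - w.im * (u+v).re := by
          have := (hn_arg_le_arg_iff hwi huvi).1 (by rw [harguv']; exact hargw)
          linarith
        have : Complex.arg (u + v) ≤ Complex.arg (u + v - w) := by
          rw [hn_arg_le_arg_iff huvi (by rw [← hmod]; exact hsv)]
          simp only [Complex.sub_re, Complex.sub_im, Complex.add_re, Complex.add_im] at *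
          nlinarith
        calc μ = Complex.arg (u + v) := harguv'.symm
          _ ≤ _ := by rw [sl, hmod]; exact this
    -- conclude r ≤ q from rank maximality
    have : rk V (r ⊔ q) ≤ rk V q := hbmax _ ⟨r ⊔ q, hsup_mem, rfl⟩
    have hqeq : q = r ⊔ q := eq_of_le_of_rk_le le_sup_right this
    rw [hqeq]
    exact le_sup_left
  refine ⟨q, hq1, hq2, hq3, ?_, ?_⟩
  · intro r hr1 hr2 hr3
    rw [hq4]
    exact hμmax _ ⟨r, hr1, hr2, hr3, rfl⟩
  · intro r hr1 hr2 hr3 hle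
    have : sl V Z p r = μ := le_antisymm (hμmax _ ⟨r, hr1, hr2, hr3, rfl⟩) (hq4 ▸ hle)
    exact hmax_le r ⟨hr1, hr2, hr3, this⟩

end Main

end HNAux2

namespace HNAux2

section Main2

variable {I : Type*} [Quiver I] [Fintype I] [DecidableEq I]
  {V : I → Type*} [∀ i, AddCommGroup (V i)] [∀ i, Module ℂ (V i)]
  [∀ i, FiniteDimensional ℂ (V i)]
  {f : ∀ ⦃i j : I⦄, (i ⟶ j) → (V i →ₗ[ℂ] V j)}
  {Z : (I → ℤ) →ₗ[ℤ] ℂ}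

open HNAux

/-- fact (D): everything strictly above the maximal destabilizer has strictly
smaller slope relative to it. -/
lemma slope_lt_above (hZ : ∀ i : I, 0 < (Z (Pi.single i 1)).im)
    {p q : ∀ i, Submodule ℂ (V i)}
    (hq2 : p ≤ q) (hq3 : p ≠ q)
    (hmax : ∀ r, IsSubrep V f r → p ≤ r → p ≠ r → sl V Z p r ≤ sl V Z p q)
    (hgreatest : ∀ r, IsSubrep V f r → p ≤ r → p ≠ r → sl V Z p q ≤ sl V Z p r → r ≤ q)
    {r : ∀ i, Submodule ℂ (V i)} (hr1 : IsSubrep V f r) (hr2 : q ≤ r) (hr3 : q ≠ r) :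
    sl V Z q r < sl V Z p q := by
  by_contra hge
  push_neg at hge
  set u : ℂ := zv V Z q - zv V Z p with hu
  set v : ℂ := zv V Z r - zv V Z q with hv
  have hui : 0 < u.im := im_pos_of_lt hZ hq2 hq3
  have hvi : 0 < v.im := im_pos_of_lt hZ hr2 hr3
  have hpr : p ≤ r := hq2.trans hr2
  have hprne : p ≠ r := fun h => hr3 (le_antisymm hr2 (h ▸ hq2))
  have hsum : zv V Z r - zv V Z p = u + v := by rw [hu, hv]; ring
  have hcross : 0 ≤ u.re * v.im - u.im * v.re := (hn_arg_le_arg_iff hui hvi).1 hge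
  have huvi : 0 < (u + v).im := by simpa using add_pos hui hvi
  have h1 : Complex.arg u ≤ Complex.arg (u + v) := by
    rw [hn_arg_le_arg_iff hui huvi]
    simp only [Complex.add_re, Complex.add_im]
    nlinarith
  have h2 : sl V Z p q ≤ sl V Z p r := by
    rw [sl, sl, hsum]; exact h1
  have := hgreatest r hr1 hpr hprne h2
  exact hr3 (le_antisymm hr2 this)

/-- the slopes of later steps of a relative HN filtration are strictly below
the first slope. -/
lemma slope_chain {p : ∀ i, Submodule ℂ (V i)} {n : ℕ} {E : ℕ → ∀ i, Submodule ℂ (V i)}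
    (h : RelHN V f Z p n E) :
    ∀ k, 1 ≤ k → k < n → sl V Z (E k) (E (k + 1)) < sl V Z (E 0) (E 1) := by
  obtain ⟨-, -, -, -, -, -, hstrict⟩ := h
  intro k hk1 hkn
  induction k with
  | zero => omega
  | succ k ih =>
    rcases Nat.lt_or_ge 0 k with h1 | h1
    · calc sl V Z (E (k + 1)) (E (k + 2)) < sl V Z (E k) (E (k + 1)) := hstrict k hkn
        _ < _ := ih (by omega) (by omega)
    · have : k = 0 := by omega
      subst this
      exact hstrict 0 hkn

/-- Claim C: in a relative HN filtration, any subrep strictly above `p` is either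
contained in `E 1` or has slope strictly less than the first slope. -/
lemma hn_first_bound (hZ : ∀ i : I, 0 < (Z (Pi.single i 1)).im)
    {p : ∀ i, Submodule ℂ (V i)} {n : ℕ} {E : ℕ → ∀ i, Submodule ℂ (V i)}
    (h : RelHN V f Z p n E) (hn : 1 ≤ n)
    {q : ∀ i, Submodule ℂ (V i)} (hq1 : IsSubrep V f q) (hq2 : p ≤ q) (hq3 : p ≠ q) :
    q ≤ E 1 ∨ sl V Z p q < sl V Z p (E 1) := by
  have hchain := slope_chain h
  obtain ⟨hsub, hbase, htop, hmono, hne, hss, hstrict⟩ := h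
  have hpE : ∀ k, p ≤ E k := by
    intro k
    induction k with
    | zero => exact hbase.ge
    | succ k ih =>
      by_cases hkn : k < n
      · exact ih.trans (hmono k hkn)
      · exact (htop (k + 1) (by omega)) ▸ le_top
  have hss0 : ∀ r, IsSubrep V f r → p ≤ r → p ≠ r → r ≤ E 1 →
      sl V Z p r ≤ sl V Z p (E 1) := by
    intro r h1 h2 h3 h4
    have := hss 0 hn r h1 (hbase ▸ h2) h4 (by rw [hbase]; exact fun hh => h3 hh.symm)
    rw [hbase] at this
    simpa only [sl_eq] using this
  suffices haux : ∀ k, ∀ q, IsSubrep V f q → p ≤ q → p ≠ q → q ≤ E k →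
      (q ≤ E 1 ∨ sl V Z p q < sl V Z p (E 1)) by
    exact haux n q hq1 hq2 hq3 ((htop n le_rfl) ▸ le_top)
  intro k
  induction k with
  | zero =>
    intro q _ h2 h3 h4
    rw [hbase] at h4
    exact absurd (le_antisymm h2 h4) h3
  | succ k ih =>
    intro q h1 h2 h3 h4
    by_cases hk : q ≤ E k
    · exact ih q h1 h2 h3 hk
    rcases Nat.eq_zero_or_pos k with rfl | hk1
    · exact Or.inl h4
    have hkn : k < n := by
      by_contra hge
      exact hk ((htop k (by omega)) ▸ le_top)
    have hqEk_ne : E k ≠ q ⊔ E k := fun hh => hk (le_sup_left.trans hh.ge)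
    set v : ℂ := zv V Z (q ⊔ E k) - zv V Z (E k) with hv
    set w : ℂ := zv V Z (q ⊓ E k) - zv V Z p with hw
    have hvi : 0 < v.im := im_pos_of_lt hZ le_sup_right hqEk_ne
    have hargv_le : sl V Z (E k) (q ⊔ E k) ≤ sl V Z (E k) (E (k + 1)) := by
      have := hss k hkn (q ⊔ E k) (isSubrep_sup h1 (hsub k)) (fun i => le_sup_right)
        (fun i => sup_le h4 (hmono k hkn) i) (fun hh => hqEk_ne hh.symm)
      simpa only [sl_eq] using this
    have hargv_lt : Complex.arg v < sl V Z p (E 1) := by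
      have := hchain k hk1 hkn
      rw [hbase] at this
      calc Complex.arg v = sl V Z (E k) (q ⊔ E k) := rfl
        _ ≤ sl V Z (E k) (E (k + 1)) := hargv_le
        _ < _ := this
    have hsum : zv V Z q - zv V Z p = v + w := by
      have := zv_modular (V := V) (Z := Z) q (E k)
      rw [hv, hw]
      linear_combination -this
    have hqi : 0 < (zv V Z q - zv V Z p).im := im_pos_of_lt hZ h2 h3
    have hvwi : 0 < (v + w).im := hsum ▸ hqi
    clear hk
    by_cases hpw : p = q ⊓ E k
    · -- w = 0
      right
      have hw0 : w = 0 := by rw [hw, ← hpw]; ring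
      have : zv V Z q - zv V Z p = v := by rw [hsum, hw0, add_zero]
      calc sl V Z p q = Complex.arg v := by rw [sl, this]
        _ < _ := hargv_lt
    · have hple : p ≤ q ⊓ E k := le_inf h2 (hpE k)
      have hwi : 0 < w.im := im_pos_of_lt hZ hple hpw
      have hw_le : Complex.arg w ≤ sl V Z p (E 1) := by
        rcases ih (q ⊓ E k) (isSubrep_inf h1 (hsub k)) hple hpw inf_le_right with hc | hc
        · exact hss0 (q ⊓ E k) (isSubrep_inf h1 (hsub k)) hple hpw hc
        · exact hc.le
      right
      have key : Complex.arg (v + w) < sl V Z p (E 1) := by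
        rcases le_or_gt (Complex.arg w) (Complex.arg v) with hcase | hcase
        · have hcross : 0 ≤ w.re * v.im - w.im * v.re :=
            (hn_arg_le_arg_iff hwi hvi).1 hcase
          have : Complex.arg (v + w) ≤ Complex.arg v := by
            rw [hn_arg_le_arg_iff hvwi hvi]
            simp only [Complex.add_re, Complex.add_im]
            nlinarith
          exact this.trans_lt hargv_lt
        · have hcross : 0 < v.re * w.im - v.im * w.re :=
            (hn_arg_lt_arg_iff hvi hwi).1 hcase
          have : Complex.arg (v + w) < Complex.arg w := by
            rw [hn_arg_lt_arg_iff hvwi hwi]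
            simp only [Complex.add_re, Complex.add_im]
            nlinarith
          exact this.trans_le hw_le
      calc sl V Z p q = Complex.arg (v + w) := by rw [sl, hsum]
        _ < _ := key

end Main2

end HNAux2

namespace HNAux2

section Main3

variable {I : Type*} [Quiver I] [Fintype I] [DecidableEq I]
  {V : I → Type*} [∀ i, AddCommGroup (V i)] [∀ i, Module ℂ (V i)]
  [∀ i, FiniteDimensional ℂ (V i)]
  {f : ∀ ⦃i j : I⦄, (i ⟶ j) → (V i →ₗ[ℂ] V j)}
  {Z : (I → ℤ) →ₗ[ℤ] ℂ}

open HNAux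

/-- the first step of any relative HN filtration is the greatest maximal
destabilizing subrepresentation. -/
lemma hn_first_step (hZ : ∀ i : I, 0 < (Z (Pi.single i 1)).im)
    {p : ∀ i, Submodule ℂ (V i)} {n : ℕ} {E : ℕ → ∀ i, Submodule ℂ (V i)}
    (h : RelHN V f Z p n E) (hptop : p ≠ ⊤)
    {q : ∀ i, Submodule ℂ (V i)} (hq1 : IsSubrep V f q) (hq2 : p ≤ q) (hq3 : p ≠ q)
    (hmax : ∀ r, IsSubrep V f r → p ≤ r → p ≠ r → sl V Z p r ≤ sl V Z p q)
    (hgreatest : ∀ r, IsSubrep V f r → p ≤ r → p ≠ r → sl V Z p q ≤ sl V Z p r → r ≤ q) :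
    1 ≤ n ∧ E 1 = q := by
  obtain ⟨hsub, hbase, htop, hmono, hne, hss, hstrict⟩ := h
  have hn : 1 ≤ n := by
    by_contra hc
    push_neg at hc
    have := htop 0 (by omega)
    rw [hbase] at this
    exact hptop this
  refine ⟨hn, ?_⟩
  have hpE1 : p ≤ E 1 := hbase ▸ hmono 0 hn
  have hpE1ne : p ≠ E 1 := hbase ▸ hne 0 hn
  have hfb := hn_first_bound hZ ⟨hsub, hbase, htop, hmono, hne, hss, hstrict⟩ hn hq1 hq2 hq3
  have hqE1 : q ≤ E 1 := by
    rcases hfb with hc | hc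
    · exact hc
    · exact absurd (hmax (E 1) (hsub 1) hpE1 hpE1ne) (not_le.2 hc)
  have hslq : sl V Z p q ≤ sl V Z p (E 1) := by
    have := hss 0 hn q hq1 (hbase ▸ hq2) hqE1 (by rw [hbase]; exact fun hh => hq3 hh.symm)
    rw [hbase] at this
    simpa only [sl_eq] using this
  exact le_antisymm (hgreatest (E 1) (hsub 1) hpE1 hpE1ne hslq) hqE1

lemma relHN_top_unique :
    ∃! F : ℕ × (ℕ → ∀ i, Submodule ℂ (V i)),
      RelHN V f Z (⊤ : ∀ i, Submodule ℂ (V i)) F.1 F.2 := by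
  refine ⟨(0, fun _ => ⊤), ⟨fun _ => isSubrep_top, rfl, fun _ _ => rfl,
    fun k hk => absurd hk (Nat.not_lt_zero k), fun k hk => absurd hk (Nat.not_lt_zero k),
    fun k hk => absurd hk (Nat.not_lt_zero k), fun k hk => by omega⟩, ?_⟩
  rintro ⟨m, E⟩ ⟨hsub, hbase, htop, hmono, hne, hss, hstrict⟩
  have hm : m = 0 := by
    by_contra hm
    have h1 : 1 ≤ m := by omega
    have hE1 : E 1 = ⊤ := le_antisymm le_top (hbase ▸ hmono 0 h1)
    exact hne 0 h1 (hbase.trans hE1.symm)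
  subst hm
  have hEk : ∀ k, E k = ⊤ := fun k => htop k (Nat.zero_le k)
  exact Prod.ext rfl (funext fun k => hEk k)

lemma relHN_exists_unique (hZ : ∀ i : I, 0 < (Z (Pi.single i 1)).im) :
    ∀ (j : ℕ) (p : ∀ i, Submodule ℂ (V i)), IsSubrep V f p →
      rk V (⊤ : ∀ i, Submodule ℂ (V i)) ≤ rk V p + j →
      ∃! F : ℕ × (ℕ → ∀ i, Submodule ℂ (V i)), RelHN V f Z p F.1 F.2 := by
  intro j
  induction j with
  | zero =>
    intro p hp hrk
    have : p = ⊤ := eq_of_le_of_rk_le le_top (by omega)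
    subst this
    exact relHN_top_unique
  | succ j ih =>
    intro p hp hrk
    by_cases hptop : p = ⊤
    · subst hptop; exact relHN_top_unique
    obtain ⟨q, hq1, hq2, hq3, hmax, hgreatest⟩ := exists_mdest (f := f) hZ hp hptop
    have hrkq : rk V (⊤ : ∀ i, Submodule ℂ (V i)) ≤ rk V q + j := by
      have := rk_lt hq2 hq3
      omega
    obtain ⟨⟨n', E'⟩, hE', huniq'⟩ := ih q hq1 hrkq
    have hE2 : RelHN V f Z q n' E' := hE'
    obtain ⟨hsub', hbase', htop', hmono', hne', hss', hstrict'⟩ := hE2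
    set Ec : ℕ → ∀ i, Submodule ℂ (V i) := fun k => Nat.casesOn k p (fun k => E' k) with hEc
    have hEc0 : Ec 0 = p := rfl
    have hEcS : ∀ k, Ec (k + 1) = E' k := fun k => rfl
    have hssp : SemistableBetween V f Z p q := by
      intro r hr hpr hrq hrne
      rw [sl_eq, sl_eq]
      exact hmax r hr hpr (fun hh => hrne hh.symm)
    have hEcHN : RelHN V f Z p (n' + 1) Ec := by
      refine ⟨?_, hEc0, ?_, ?_, ?_, ?_, ?_⟩
      · intro k
        cases k with
        | zero => exact hp
        | succ k => exact hsub' k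
      · intro k hk
        match k, hk with
        | (k + 1), hk => exact htop' k (by omega)
      · intro k hk
        cases k with
        | zero => exact le_of_le_of_eq hq2 hbase'.symm
        | succ k => exact hmono' k (by omega)
      · intro k hk
        cases k with
        | zero => exact fun hh => hq3 (hh.trans hbase')
        | succ k => exact hne' k (by omega)
      · intro k hk
        cases k with
        | zero =>
          show SemistableBetween V f Z p (E' 0)
          rw [hbase']; exact hssp
        | succ k => exact hss' k (by omega)
      · intro k hk
        cases k with
        | zero =>
          show sl V Z (E' 0) (E' 1) < sl V Z p (E' 0)
          rw [hbase']
          exact slope_lt_above hZ hq2 hq3 hmax hgreatest (hsub' 1)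
            (hbase' ▸ hmono' 0 (by omega)) (hbase' ▸ hne' 0 (by omega))
        | succ k => exact hstrict' k (by omega)
    refine ⟨(n' + 1, Ec), hEcHN, ?_⟩
    rintro ⟨m, E⟩ hE
    obtain ⟨h1m, hE1⟩ := hn_first_step hZ hE hptop hq1 hq2 hq3 hmax hgreatest
    obtain ⟨m₀, rfl⟩ : ∃ m₀, m = m₀ + 1 := ⟨m - 1, by omega⟩
    obtain ⟨hsub, hbase, htop, hmono, hne, hss, hstrict⟩ := hE
    have hshift : RelHN V f Z q m₀ (fun k => E (k + 1)) := by
      refine ⟨fun k => hsub (k + 1), hE1, ?_, ?_, ?_, ?_, ?_⟩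
      · intro k hk; exact htop (k + 1) (by omega)
      · intro k hk; exact hmono (k + 1) (by omega)
      · intro k hk; exact hne (k + 1) (by omega)
      · intro k hk; exact hss (k + 1) (by omega)
      · intro k hk; exact hstrict (k + 1) (by omega)
    have := huniq' (m₀, fun k => E (k + 1)) hshift
    rw [Prod.mk.injEq] at this
    obtain ⟨hm₀, hEsh⟩ := this
    refine Prod.ext (by simp [hm₀]) ?_
    funext k
    cases k with
    | zero => exact hbase.trans hEc0.symm
    | succ k =>
      show E (k + 1) = Ec (k + 1)
      rw [hEcS]
      exact congrFun hEsh k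

end Main3

end HNAux2


/-- every nonzero finite-dimensional representation of a finite quiver
admits a unique Harder–Narasimhan filtration with respect to a central charge `Z`
taking the standard basis vectors to the upper half plane. -/
theorem harder_narasimhan_exists_unique
    {I : Type*} [Quiver I] [Fintype I] [DecidableEq I] [∀ i j : I, Fintype (i ⟶ j)]
    (V : I → Type*) [∀ i, AddCommGroup (V i)] [∀ i, Module ℂ (V i)]
    [∀ i, FiniteDimensional ℂ (V i)]
    (f : ∀ ⦃i j : I⦄, (i ⟶ j) → (V i →ₗ[ℂ] V j))
    (Z : (I → ℤ) →ₗ[ℤ] ℂ) (hZ : ∀ i : I, 0 < (Z (Pi.single i 1)).im)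
    (hV : ∃ (i : I) (x : V i), x ≠ 0) :
    ∃! F : ℕ × (ℕ → ∀ i, Submodule ℂ (V i)), IsHNFiltration V f Z F.1 F.2 := by
  obtain ⟨F, hF, hU⟩ := HNAux2.relHN_exists_unique (f := f) hZ
    (HNAux.rk V (⊤ : ∀ i, Submodule ℂ (V i))) ⊥ HNAux2.isSubrep_bot (Nat.le_add_left _ _)
  exact ⟨F, (HNAux2.isHN_iff_relHN F.1 F.2).2 hF,
    fun y hy => hU y ((HNAux2.isHN_iff_relHN y.1 y.2).1 hy)⟩
end

section
/- Let D be a triangulated category with t-structure whose heart is A, let (T, F) be a torsion pair in A, and let (T′, F′) be a torsion pair in the tilted heart A^{(T[−1],F)} with T′ ⊂ F[0]. Then (T″, F″) with T″ = T ⋆ T′ and F″ = F ∩ T′^⊥ is a torsion pair in A, and the twice-tilted aisle satisfies (D_{≤0}^{(T[−1],F)})^{(T′[−1],F′)} = D_{≤0}^{(T″[−1],F″)}. -/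
open CategoryTheory CategoryTheory.Pretriangulated

section Tilting

variable (C : Type*) [Category C] [Limits.HasZeroObject C] [Preadditive C]
  [HasShift C ℤ] [∀ n : ℤ, Functor.Additive (shiftFunctor C n)] [Pretriangulated C]

/-- There is a distinguished triangle `X ⟶ Y ⟶ Z ⟶ X⟦1⟧`. -/
def DistTri (X Y Z : C) : Prop :=
  ∃ (f : X ⟶ Y) (g : Y ⟶ Z) (h : Z ⟶ X⟦(1 : ℤ)⟧),
    Triangle.mk f g h ∈ distinguishedTriangles

/-- A class of objects closed under isomorphism. -/
def IsoClosed (S : Set C) : Prop := ∀ X Y : C, (X ≅ Y) → X ∈ S → Y ∈ S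

/-- `S₁ ⋆ S₂`: the class of objects `Y` which are extensions of an object of `S₂`
by an object of `S₁`, i.e. which fit into a distinguished triangle
`X ⟶ Y ⟶ Z ⟶ X⟦1⟧` with `X ∈ S₁`, `Z ∈ S₂`. -/
def StarCls (S₁ S₂ : Set C) : Set C :=
  {Y | ∃ X ∈ S₁, ∃ Z ∈ S₂, DistTri C X Y Z}

/-- `Hom(S₁, S₂) = 0`. -/
def HomOrth (S₁ S₂ : Set C) : Prop :=
  ∀ X ∈ S₁, ∀ Y ∈ S₂, ∀ f : X ⟶ Y, f = 0

/-- The right orthogonal `S^⊥` of a class `S` inside the class `A`. -/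
def RightOrth (A S : Set C) : Set C :=
  {X ∈ A | ∀ Y ∈ S, ∀ f : Y ⟶ X, f = 0}

/-- `(T, F)` is a torsion pair in the heart `A`: both classes are iso-closed
subclasses of `A`, `Hom(T, F) = 0`, and every object `X ∈ A` sits in a short exact
sequence `0 → X_T → X → X_F → 0` (equivalently, a distinguished triangle with all
three terms in `A`) with `X_T ∈ T`, `X_F ∈ F`. -/
def IsTorsionPair (A T F : Set C) : Prop :=
  T ⊆ A ∧ F ⊆ A ∧ IsoClosed C T ∧ IsoClosed C F ∧ HomOrth C T F ∧
    ∀ X ∈ A, ∃ t ∈ T, ∃ f ∈ F, DistTri C t X f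

/-- `(Dle, Dge)` is a t-structure on `C`: `Dle n` plays the role of `D_{≤n}` and
`Dge n` of `D_{≥n}`. -/
def IsTStructure (Dle Dge : ℤ → Set C) : Prop :=
  (∀ n, IsoClosed C (Dle n)) ∧ (∀ n, IsoClosed C (Dge n)) ∧
  (∀ n, Dle n ⊆ Dle (n + 1)) ∧ (∀ n, Dge (n + 1) ⊆ Dge n) ∧
  (∀ (n k : ℤ) (X : C), X ∈ Dle n ↔ X⟦k⟧ ∈ Dle (n - k)) ∧
  (∀ (n k : ℤ) (X : C), X ∈ Dge n ↔ X⟦k⟧ ∈ Dge (n - k)) ∧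
  HomOrth C (Dle 0) (Dge 1) ∧
  (∀ X : C, ∃ A ∈ Dle 0, ∃ B ∈ Dge 1, DistTri C A X B)

/-- `H1` computes the first cohomology with values in the heart `A`, relative to the
aisle `D0 = D_{≤0}`, on objects of `D_{≤1}`: for `X` with `X⟦1⟧ ∈ D0` one has
`H¹(X) ∈ A` and a distinguished triangle `τ_{≤0}X ⟶ X ⟶ H¹(X)⟦−1⟧ ⟶` with
`τ_{≤0}X ∈ D0`. -/
def IsH1 (D0 A : Set C) (H1 : C → C) : Prop :=
  ∀ X : C, X⟦(1 : ℤ)⟧ ∈ D0 →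
    H1 X ∈ A ∧ ∃ Y ∈ D0, DistTri C Y X ((H1 X)⟦(-1 : ℤ)⟧)

end Tilting

open CategoryTheory.Limits

namespace DTTP

set_option linter.unusedSectionVars false
variable {C : Type*} [Category C] [Limits.HasZeroObject C] [Preadditive C]
  [HasShift C ℤ] [∀ n : ℤ, Functor.Additive (shiftFunctor C n)] [Pretriangulated C]

section Kit

variable {X Y Z W : C} {a : X ⟶ Y} {b : Y ⟶ Z} {c : Z ⟶ X⟦(1:ℤ)⟧}

lemma yo₂ (h : Triangle.mk a b c ∈ distTriang C) (f : Y ⟶ W) (hf : a ≫ f = 0) :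
    ∃ g : Z ⟶ W, f = b ≫ g := Triangle.yoneda_exact₂ _ h f hf

lemma yo₃ (h : Triangle.mk a b c ∈ distTriang C) (f : Z ⟶ W) (hf : b ≫ f = 0) :
    ∃ g : X⟦(1:ℤ)⟧ ⟶ W, f = c ≫ g := Triangle.yoneda_exact₃ _ h f hf

lemma yo₃z (h : Triangle.mk a b c ∈ distTriang C) (f : Z ⟶ W) (hf : b ≫ f = 0)
    (hW : ∀ u : X⟦(1:ℤ)⟧ ⟶ W, u = 0) : f = 0 := by
  obtain ⟨g, hg⟩ := yo₃ h f hf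
  rw [hg, hW g, comp_zero]

lemma co₂ (h : Triangle.mk a b c ∈ distTriang C) (f : W ⟶ Y) (hf : f ≫ b = 0) :
    ∃ g : W ⟶ X, f = g ≫ a := Triangle.coyoneda_exact₂ _ h f hf

lemma co₃ (h : Triangle.mk a b c ∈ distTriang C) (f : W ⟶ Z) (hf : f ≫ c = 0) :
    ∃ g : W ⟶ Y, f = g ≫ b := Triangle.coyoneda_exact₃ _ h f hf

lemma cz₁₂ (h : Triangle.mk a b c ∈ distTriang C) : a ≫ b = 0 :=
  comp_distTriang_mor_zero₁₂ _ h

lemma cz₂₃ (h : Triangle.mk a b c ∈ distTriang C) : b ≫ c = 0 :=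
  comp_distTriang_mor_zero₂₃ _ h

lemma rot (h : Triangle.mk a b c ∈ distTriang C) :
    Triangle.mk b c (-a⟦(1:ℤ)⟧') ∈ distTriang C := rot_of_distTriang _ h

/-- first map of rotated² triangle is `c`, second is `-a⟦1⟧`. -/
lemma yo₂r₂ (h : Triangle.mk a b c ∈ distTriang C) (f : X⟦(1:ℤ)⟧ ⟶ W)
    (hf : c ≫ f = 0) : ∃ g : Y⟦(1:ℤ)⟧ ⟶ W, f = (-a⟦(1:ℤ)⟧') ≫ g :=
  yo₂ (rot (rot h)) f hf

lemma iso₁₂ (h : Triangle.mk a b c ∈ distTriang C) (hz : IsZero Z) :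
    Nonempty (X ≅ Y) := by
  have : IsIso ((Triangle.mk a b c).mor₁) := (Triangle.isZero₃_iff_isIso₁ _ h).1 hz
  exact ⟨@asIso _ _ _ _ ((Triangle.mk a b c).mor₁) this⟩

lemma iso₂₃ (h : Triangle.mk a b c ∈ distTriang C) (hz : IsZero X) :
    Nonempty (Y ≅ Z) := by
  have : IsIso ((Triangle.mk a b c).mor₂) := (Triangle.isZero₁_iff_isIso₂ _ h).1 hz
  exact ⟨@asIso _ _ _ _ ((Triangle.mk a b c).mor₂) this⟩

lemma isZero_of_retract (h : Triangle.mk a b c ∈ distTriang C) (hb : b = 0)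
    (hz : ∀ u : X⟦(1:ℤ)⟧ ⟶ Z, u = 0) : IsZero Z := by
  obtain ⟨g, hg⟩ := yo₂ (rot h) (𝟙 Z) (by rw [hb, zero_comp])
  rw [IsZero.iff_id_eq_zero, hg, hz g, comp_zero]

/-- shifted versions -/
lemma yo₂s (h : Triangle.mk a b c ∈ distTriang C) (n : ℤ) (f : Y⟦n⟧ ⟶ W)
    (hf : a⟦n⟧' ≫ f = 0) : ∃ g : Z⟦n⟧ ⟶ W, f = b⟦n⟧' ≫ g := by
  obtain ⟨g, hg⟩ := Triangle.yoneda_exact₂ _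
    (Triangle.shift_distinguished (Triangle.mk a b c) h n) f
    (by show (n.negOnePow • a⟦n⟧') ≫ f = 0; rw [Linear.units_smul_comp, hf, smul_zero])
  refine ⟨n.negOnePow • g, ?_⟩
  rw [hg]; show (n.negOnePow • b⟦n⟧') ≫ g = b⟦n⟧' ≫ (n.negOnePow • g)
  exact (Linear.units_smul_comp _ _ _).trans (Linear.comp_units_smul _ _ _).symm

lemma co₂s (h : Triangle.mk a b c ∈ distTriang C) (n : ℤ) (f : W ⟶ Y⟦n⟧)
    (hf : f ≫ b⟦n⟧' = 0) : ∃ g : W ⟶ X⟦n⟧, f = g ≫ a⟦n⟧' := by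
  obtain ⟨g, hg⟩ := Triangle.coyoneda_exact₂ _
    (Triangle.shift_distinguished (Triangle.mk a b c) h n) f
    (by show f ≫ (n.negOnePow • b⟦n⟧') = 0; rw [Linear.comp_units_smul, hf, smul_zero])
  refine ⟨n.negOnePow • g, ?_⟩
  rw [hg]; show g ≫ (n.negOnePow • a⟦n⟧') = (n.negOnePow • g) ≫ a⟦n⟧'
  exact (Linear.comp_units_smul _ _ _).trans (Linear.units_smul_comp _ _ _).symm

lemma yo₃sz (h : Triangle.mk a b c ∈ distTriang C) (n : ℤ) (f : Z⟦n⟧ ⟶ W)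
    (hf : b⟦n⟧' ≫ f = 0) (hW : ∀ u : X⟦n⟧⟦(1:ℤ)⟧ ⟶ W, u = 0) : f = 0 := by
  obtain ⟨g, hg⟩ := Triangle.yoneda_exact₃ _
    (Triangle.shift_distinguished (Triangle.mk a b c) h n) f
    (by show (n.negOnePow • b⟦n⟧') ≫ f = 0; rw [Linear.units_smul_comp, hf, smul_zero])
  rw [hg, hW g]; exact comp_zero

lemma hz_shift (n : ℤ) {P Q : C} (h : ∀ f : P ⟶ Q, f = 0) :
    ∀ f : P⟦n⟧ ⟶ Q⟦n⟧, f = 0 := by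
  intro f
  obtain ⟨g, rfl⟩ := (shiftFunctor C n).map_surjective f
  rw [h g, Functor.map_zero]

lemma hz_conj {P Q P' Q' : C} (e₁ : P ≅ P') (e₂ : Q ≅ Q')
    (h : ∀ f : P ⟶ Q, f = 0) : ∀ f : P' ⟶ Q', f = 0 := by
  intro f
  have : e₁.hom ≫ f ≫ e₂.inv = 0 := h _
  calc f = e₁.inv ≫ (e₁.hom ≫ f ≫ e₂.inv) ≫ e₂.hom := by simp
  _ = 0 := by rw [this]; simp

lemma isZero_shift_reflect {P : C} (n : ℤ) (h : IsZero (P⟦n⟧)) : IsZero P := by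
  rw [IsZero.iff_id_eq_zero]
  have : (shiftFunctor C n).map (𝟙 P) = 0 := by
    rw [CategoryTheory.Functor.map_id]; exact h.eq_of_src _ _
  rwa [(shiftFunctor C n).map_eq_zero_iff] at this

lemma isZero_shift {P : C} (n : ℤ) (h : IsZero P) : IsZero (P⟦n⟧) := by
  rw [IsZero.iff_id_eq_zero, ← CategoryTheory.Functor.map_id]
  rw [IsZero.iff_id_eq_zero] at h
  rw [h, Functor.map_zero]

/-- uniqueness of cones under orthogonality -/
lemma coneUnique {Y₁ M Z₁ Y₂ Z₂ : C}
    {i₁ : Y₁ ⟶ M} {u₁ : M ⟶ Z₁} {dd₁ : Z₁ ⟶ Y₁⟦(1:ℤ)⟧}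
    (h₁ : Triangle.mk i₁ u₁ dd₁ ∈ distTriang C)
    {i₂ : Y₂ ⟶ M} {u₂ : M ⟶ Z₂} {dd₂ : Z₂ ⟶ Y₂⟦(1:ℤ)⟧}
    (h₂ : Triangle.mk i₂ u₂ dd₂ ∈ distTriang C)
    (v12 : ∀ f : Y₁ ⟶ Z₂, f = 0) (v21 : ∀ f : Y₂ ⟶ Z₁, f = 0)
    (v11 : ∀ f : Y₁⟦(1:ℤ)⟧ ⟶ Z₁, f = 0) (v22 : ∀ f : Y₂⟦(1:ℤ)⟧ ⟶ Z₂, f = 0) :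
    Nonempty (Z₁ ≅ Z₂) := by
  obtain ⟨φ, hφ⟩ := yo₂ h₁ u₂ (v12 _)
  obtain ⟨ψ, hψ⟩ := yo₂ h₂ u₁ (v21 _)
  have hφψ : φ ≫ ψ = 𝟙 Z₁ := by
    have h0 : u₁ ≫ (φ ≫ ψ - 𝟙 Z₁) = 0 := by
      simp only [Preadditive.comp_sub, Category.comp_id, ← Category.assoc, ← hφ, ← hψ, sub_self]
    have := yo₃z h₁ (φ ≫ ψ - 𝟙 Z₁) h0 v11
    rwa [sub_eq_zero] at this
  have hψφ : ψ ≫ φ = 𝟙 Z₂ := by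
    have h0 : u₂ ≫ (ψ ≫ φ - 𝟙 Z₂) = 0 := by
      simp only [Preadditive.comp_sub, Category.comp_id, ← Category.assoc, ← hψ, ← hφ, sub_self]
    have := yo₃z h₂ (ψ ≫ φ - 𝟙 Z₂) h0 v22
    rwa [sub_eq_zero] at this
  exact ⟨⟨φ, ψ, hφψ, hψφ⟩⟩

lemma cz₃₁ (h : Triangle.mk a b c ∈ distTriang C) : c ≫ a⟦(1:ℤ)⟧' = 0 :=
  comp_distTriang_mor_zero₃₁ _ h

noncomputable def negShiftIso (P : C) : P⟦(-1:ℤ)⟧⟦(1:ℤ)⟧ ≅ P :=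
  (shiftFunctorCompIsoId C (-1:ℤ) (1:ℤ) (by omega)).app P

lemma distIso {Y' : C} (h : Triangle.mk a b c ∈ distTriang C) (e : Y ≅ Y') :
    Triangle.mk (a ≫ e.hom) (e.inv ≫ b) c ∈ distTriang C := by
  refine isomorphic_distinguished _ h _
    (Triangle.isoMk _ _ (Iso.refl _) e.symm (Iso.refl _) ?_ ?_ ?_) <;> simp [Triangle.mk]

lemma contractibleZ (x N : C) (hN : IsZero N) :
    Triangle.mk (𝟙 x) (0 : x ⟶ N) (0 : N ⟶ x⟦(1:ℤ)⟧) ∈ distTriang C := by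
  refine isomorphic_distinguished _ (contractible_distinguished x) _
    (Triangle.isoMk _ _ (Iso.refl _) (Iso.refl _) (hN.iso (Limits.isZero_zero C)) ?_ ?_ ?_)
  · exact (Category.comp_id _).trans (Category.id_comp _).symm
  · exact (Limits.isZero_zero C).eq_of_tgt _ _
  · exact hN.eq_of_src _ _


end Kit

section TS

variable {Dle Dge : ℤ → Set C}

lemma leSub (ht : IsTStructure C Dle Dge) {n m : ℤ} (h : n ≤ m) : Dle n ⊆ Dle m := by
  exact Int.le_induction (motive := fun m _ => Dle n ⊆ Dle m) subset_rfl
    (fun m _ ih => ih.trans (ht.2.2.1 m)) m h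

lemma geSub (ht : IsTStructure C Dle Dge) {n m : ℤ} (h : n ≤ m) : Dge m ⊆ Dge n := by
  exact Int.le_induction (motive := fun m _ => Dge m ⊆ Dge n) subset_rfl
    (fun m _ ih => (ht.2.2.2.1 m).trans ih) m h

lemma shiftLe (ht : IsTStructure C Dle Dge) {X : C} {n : ℤ} (k : ℤ) (h : X ∈ Dle n) :
    X⟦k⟧ ∈ Dle (n - k) := (ht.2.2.2.2.1 n k X).1 h

lemma shiftGe (ht : IsTStructure C Dle Dge) {X : C} {n : ℤ} (k : ℤ) (h : X ∈ Dge n) :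
    X⟦k⟧ ∈ Dge (n - k) := (ht.2.2.2.2.2.1 n k X).1 h

lemma shiftLe' (ht : IsTStructure C Dle Dge) {X : C} {n m : ℤ} (k : ℤ) (h : X ∈ Dle n)
    (hm : n - k = m) : X⟦k⟧ ∈ Dle m := hm ▸ shiftLe ht k h

lemma shiftGe' (ht : IsTStructure C Dle Dge) {X : C} {n m : ℤ} (k : ℤ) (h : X ∈ Dge n)
    (hm : n - k = m) : X⟦k⟧ ∈ Dge m := hm ▸ shiftGe ht k h

lemma unshiftLe (ht : IsTStructure C Dle Dge) {X : C} {n m k : ℤ} (h : X⟦k⟧ ∈ Dle m)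
    (hm : n - k = m) : X ∈ Dle n := (ht.2.2.2.2.1 n k X).2 (hm ▸ h)

lemma unshiftGe (ht : IsTStructure C Dle Dge) {X : C} {n m k : ℤ} (h : X⟦k⟧ ∈ Dge m)
    (hm : n - k = m) : X ∈ Dge n := (ht.2.2.2.2.2.1 n k X).2 (hm ▸ h)

lemma orthO (ht : IsTStructure C Dle Dge) {a b : ℤ} (hab : a < b) {X Y : C}
    (hX : X ∈ Dle a) (hY : Y ∈ Dge b) : ∀ f : X ⟶ Y, f = 0 := by
  intro f
  have hX0 : X⟦a⟧ ∈ Dle 0 := shiftLe' ht a hX (sub_self a)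
  have hY1 : Y⟦a⟧ ∈ Dge 1 := geSub ht (show (1:ℤ) ≤ b - a by omega) (shiftGe ht a hY)
  have h0 : (shiftFunctor C a).map f = 0 := ht.2.2.2.2.2.2.1 _ hX0 _ hY1 _
  rw [← (shiftFunctor C a).map_eq_zero_iff]
  exact h0

lemma charLe0 (ht : IsTStructure C Dle Dge) {X : C}
    (h : ∀ Z ∈ Dge 1, ∀ f : X ⟶ Z, f = 0) : X ∈ Dle 0 := by
  obtain ⟨A₀, hA₀, B₀, hB₀, a, b, c, hT⟩ := ht.2.2.2.2.2.2.2 X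
  have hzB : IsZero B₀ := isZero_of_retract hT (h _ hB₀ b)
    (orthO ht (show (-1:ℤ) < 1 by omega) (shiftLe' ht 1 hA₀ (show (0:ℤ)-1 = -1 by omega)) hB₀)
  obtain ⟨e⟩ := iso₁₂ hT hzB
  exact ht.1 0 A₀ X e hA₀

lemma charGe1 (ht : IsTStructure C Dle Dge) {X : C}
    (h : ∀ W ∈ Dle 0, ∀ f : W ⟶ X, f = 0) : X ∈ Dge 1 := by
  obtain ⟨A₀, hA₀, B₀, hB₀, a, b, c, hT⟩ := ht.2.2.2.2.2.2.2 X
  have ha : a = 0 := h _ hA₀ a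
  have hzA : IsZero A₀ := by
    obtain ⟨g, hg⟩ := co₂ (rot (rot hT)) (𝟙 (A₀⟦(1:ℤ)⟧))
      (by rw [Category.id_comp, ha, Functor.map_zero, neg_zero])
    have hg0 : g = 0 := orthO ht (show (-1:ℤ) < 1 by omega)
      (shiftLe' ht 1 hA₀ (show (0:ℤ)-1 = -1 by omega)) hB₀ g
    exact isZero_shift_reflect _ (by rw [IsZero.iff_id_eq_zero, hg, hg0, zero_comp])
  obtain ⟨e⟩ := iso₂₃ hT hzA
  exact ht.2.1 1 B₀ X e.symm hB₀

lemma extLe0 (ht : IsTStructure C Dle Dge) {X Y Z : C} {a : X ⟶ Y} {b : Y ⟶ Z}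
    {c : Z ⟶ X⟦(1:ℤ)⟧} (hT : Triangle.mk a b c ∈ distTriang C)
    (h1 : X ∈ Dle 0) (h3 : Z ∈ Dle 0) : Y ∈ Dle 0 := by
  refine charLe0 ht (fun W hW f => ?_)
  obtain ⟨g, hg⟩ := yo₂ hT f (orthO ht (by omega) h1 hW _)
  rw [hg, orthO ht (by omega) h3 hW g, comp_zero]

lemma extGe1 (ht : IsTStructure C Dle Dge) {X Y Z : C} {a : X ⟶ Y} {b : Y ⟶ Z}
    {c : Z ⟶ X⟦(1:ℤ)⟧} (hT : Triangle.mk a b c ∈ distTriang C)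
    (h1 : X ∈ Dge 1) (h3 : Z ∈ Dge 1) : Y ∈ Dge 1 := by
  refine charGe1 ht (fun W hW f => ?_)
  obtain ⟨g, hg⟩ := co₂ hT f (orthO ht (by omega) hW h3 _)
  rw [hg, orthO ht (by omega) hW h1 g, zero_comp]

lemma extLe (ht : IsTStructure C Dle Dge) (n : ℤ) {X Y Z : C} {a : X ⟶ Y} {b : Y ⟶ Z}
    {c : Z ⟶ X⟦(1:ℤ)⟧} (hT : Triangle.mk a b c ∈ distTriang C)
    (h1 : X ∈ Dle n) (h3 : Z ∈ Dle n) : Y ∈ Dle n := by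
  refine unshiftLe ht (m := 0) (k := n)
    (extLe0 ht (Triangle.shift_distinguished _ hT n)
      (shiftLe' ht n h1 (sub_self n)) (shiftLe' ht n h3 (sub_self n))) (sub_self n)

lemma extGe (ht : IsTStructure C Dle Dge) (n : ℤ) {X Y Z : C} {a : X ⟶ Y} {b : Y ⟶ Z}
    {c : Z ⟶ X⟦(1:ℤ)⟧} (hT : Triangle.mk a b c ∈ distTriang C)
    (h1 : X ∈ Dge n) (h3 : Z ∈ Dge n) : Y ∈ Dge n := by
  refine unshiftGe ht (m := 1) (k := n - 1)
    (extGe1 ht (Triangle.shift_distinguished _ hT (n-1))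
      (shiftGe' ht (n-1) h1 (by omega)) (shiftGe' ht (n-1) h3 (by omega))) (by omega)

lemma zeroLe0 (ht : IsTStructure C Dle Dge) {N : C} (h : IsZero N) : N ∈ Dle 0 :=
  charLe0 ht (fun Z _ f => h.eq_of_src f 0)

lemma zeroGe1 (ht : IsTStructure C Dle Dge) {N : C} (h : IsZero N) : N ∈ Dge 1 :=
  charGe1 ht (fun W _ f => h.eq_of_tgt f 0)

end TS

end DTTP


/-- Let `D` be a triangulated category with a t-structure
`(D_{≤0}, D_{≥1})` with heart `A`, let `(T, F)` be a torsion pair in `A`, and let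
`(T′, F′)` be a torsion pair in the tilted heart `A^{(T[−1],F)} = F ⋆ T[−1]` with
`T′ ⊆ F`.  Then `(T″, F″)` with `T″ = T ⋆ T′` and `F″ = F ∩ T′^⊥` is a torsion pair
in `A`, and the twice-tilted aisle satisfies
`(D_{≤0}^{(T[−1],F)})^{(T′[−1],F′)} = D_{≤0}^{(T″[−1],F″)}`, where the tilted aisle
is described by `D_{≤0}^{(T[−1],F)} = {X ∈ D_{≤1} : H¹_A(X) ∈ T}` (and similarly for
the second tilt, using the cohomology `H¹` of the tilted t-structure). -/
theorem double_tilting_torsion_pairs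
    (C : Type*) [Category C] [Limits.HasZeroObject C] [Preadditive C]
    [HasShift C ℤ] [∀ n : ℤ, Functor.Additive (shiftFunctor C n)] [Pretriangulated C]
    (Dle Dge : ℤ → Set C) (ht : IsTStructure C Dle Dge)
    -- the heart of the t-structure
    (A : Set C) (hA : A = Dle 0 ∩ Dge 0)
    -- a torsion pair (T, F) in the heart
    (T F : Set C) (hTF : IsTorsionPair C A T F)
    -- the cohomology functor H¹ of the original t-structure
    (H1 : C → C) (hH1 : IsH1 C (Dle 0) A H1)
    -- the tilted aisle D_{≤0}^{(T[−1],F)} and the tilted heart A^{(T[−1],F)} = F ⋆ T[−1]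
    (Dle' A' : Set C)
    (hDle' : Dle' = {X : C | X⟦(1 : ℤ)⟧ ∈ Dle 0 ∧ H1 X ∈ T})
    (hA' : A' = StarCls C F ((fun X : C => X⟦(-1 : ℤ)⟧) '' T))
    -- a torsion pair (T′, F′) in the tilted heart with T′ ⊆ F[0]
    (T' F' : Set C) (hT'F' : IsTorsionPair C A' T' F') (hT'le : T' ⊆ F)
    -- the cohomology functor H¹ of the tilted t-structure
    (H1' : C → C) (hH1' : IsH1 C Dle' A' H1') :
    IsTorsionPair C A (StarCls C T T') (F ∩ RightOrth C A T') ∧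
    {X : C | X⟦(1 : ℤ)⟧ ∈ Dle' ∧ H1' X ∈ T'} =
      {X : C | X⟦(1 : ℤ)⟧ ∈ Dle 0 ∧ H1 X ∈ StarCls C T T'} := by
  classical
  obtain ⟨hTsub, hFsub, hTiso, hFiso, hTForth, hTFdec⟩ := hTF
  obtain ⟨hT'sub, hF'sub, hT'iso, hF'iso, hT'F'orth, hT'F'dec⟩ := hT'F'
  -- basic heart facts
  have hAle : ∀ {x : C}, x ∈ A → x ∈ Dle 0 := fun hx => by
    rw [hA] at hx; exact hx.1
  have hAge : ∀ {x : C}, x ∈ A → x ∈ Dge 0 := fun hx => by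
    rw [hA] at hx; exact hx.2
  have hAmem : ∀ {x : C}, x ∈ Dle 0 → x ∈ Dge 0 → x ∈ A := fun h1 h2 => by
    rw [hA]; exact ⟨h1, h2⟩
  have hAiso : IsoClosed C A := by
    rw [hA]; intro x y e hx; exact ⟨ht.1 0 x y e hx.1, ht.2.1 0 x y e hx.2⟩
  -- zero objects
  have hzA : ∀ {N : C}, IsZero N → N ∈ A := fun h =>
    hAmem (DTTP.zeroLe0 ht h) (DTTP.geSub ht (show (0:ℤ) ≤ 1 by omega) (DTTP.zeroGe1 ht h))
  obtain ⟨Z0, h0⟩ := (inferInstance : Limits.HasZeroObject C).zero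
  obtain ⟨t₀, ht₀T, f₀, hf₀F, a₀, b₀, c₀, hTri₀⟩ := hTFdec Z0 (hzA h0)
  have hzf₀ : IsZero f₀ := DTTP.isZero_of_retract hTri₀ (h0.eq_of_src _ _)
    (DTTP.orthO ht (show (-1:ℤ) < 0 by omega)
      (DTTP.shiftLe' ht 1 (hAle (hTsub ht₀T)) (by omega)) (hAge (hFsub hf₀F)))
  have hzt₀ : IsZero t₀ := Triangle.isZero₁_of_isZero₂₃ _ hTri₀ h0 hzf₀
  have hzT : ∀ {N : C}, IsZero N → N ∈ T := fun h => hTiso t₀ _ (hzt₀.iso h) ht₀T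
  have hzF : ∀ {N : C}, IsZero N → N ∈ F := fun h => hFiso f₀ _ (hzf₀.iso h) hf₀F
  -- F ⊆ A'
  have hFA' : F ⊆ A' := by
    intro x hx
    rw [hA']
    refine ⟨x, hx, Z0⟦(-1:ℤ)⟧, ⟨Z0, hzT h0, rfl⟩, 𝟙 x, 0, 0, ?_⟩
    exact DTTP.contractibleZ x _ (DTTP.isZero_shift _ h0)
  -- unfolding membership in A'
  have hA'elim : ∀ {z : C}, z ∈ A' → ∃ e ∈ F, ∃ s ∈ T,
      ∃ (i : e ⟶ z) (u : z ⟶ s⟦(-1:ℤ)⟧) (dd : s⟦(-1:ℤ)⟧ ⟶ e⟦(1:ℤ)⟧),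
        Triangle.mk i u dd ∈ distTriang C := by
    intro z hz
    rw [hA'] at hz
    obtain ⟨e, he, Z, ⟨s, hs, rfl⟩, i, u, dd, hTr⟩ := hz
    exact ⟨e, he, s, hs, i, u, dd, hTr⟩
  have hA'ge0 : ∀ {z : C}, z ∈ A' → z ∈ Dge 0 := by
    intro z hz
    obtain ⟨e, he, sz, hs, i, u, dd, hTr⟩ := hA'elim hz
    exact DTTP.extGe ht 0 hTr (hAge (hFsub he))
      (DTTP.geSub ht (show (0:ℤ) ≤ 1 by omega)
        (DTTP.shiftGe' ht (-1) (hAge (hTsub hs)) (by omega)))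
  have hA'le1 : ∀ {z : C}, z ∈ A' → z ∈ Dle 1 := by
    intro z hz
    obtain ⟨e, he, sz, hs, i, u, dd, hTr⟩ := hA'elim hz
    exact DTTP.extLe ht 1 hTr (DTTP.leSub ht (show (0:ℤ) ≤ 1 by omega) (hAle (hFsub he)))
      (DTTP.shiftLe' ht (-1) (hAle (hTsub hs)) (by omega))
  -- Hom(T, A') = 0
  have hTA' : ∀ {s z : C}, s ∈ T → z ∈ A' → ∀ f : s ⟶ z, f = 0 := by
    intro s z hs hz f
    obtain ⟨e, he, s₂, hs₂, i, u, dd, hTr⟩ := hA'elim hz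
    have h1 : f ≫ u = 0 := DTTP.orthO ht (show (0:ℤ) < 1 by omega) (hAle (hTsub hs))
      (DTTP.shiftGe' ht (-1) (hAge (hTsub hs₂)) (by omega)) _
    obtain ⟨g, hg⟩ := DTTP.co₂ hTr f h1
    rw [hg, hTForth s hs e he g, zero_comp]
  -- Hom(A'⟦1⟧, A') = 0
  have hA'1A' : ∀ {z w : C}, z ∈ A' → w ∈ A' → ∀ f : z⟦(1:ℤ)⟧ ⟶ w, f = 0 := by
    intro z w hz hw f
    obtain ⟨e, he, sz, hs, i, u, dd, hTr⟩ := hA'elim hz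
    have h1 : i⟦(1:ℤ)⟧' ≫ f = 0 := DTTP.orthO ht (show (-1:ℤ) < 0 by omega)
      (DTTP.shiftLe' ht 1 (hAle (hFsub he)) (by omega)) (hA'ge0 hw) _
    obtain ⟨g, hg⟩ := DTTP.yo₂s hTr 1 f h1
    have hg0 : g = 0 := DTTP.hz_conj ((DTTP.negShiftIso sz).symm) (Iso.refl w)
      (hTA' hs hw) g
    rw [hg, hg0, comp_zero]
  -- characterisation of T'
  have hT'char : ∀ {z : C}, z ∈ A' → (∀ y' ∈ F', ∀ f : z ⟶ y', f = 0) → z ∈ T' := by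
    intro z hz hperp
    obtain ⟨p, hp, q, hq, aa, bb, cc, hTr⟩ := hT'F'dec z hz
    have hzq : IsZero q := DTTP.isZero_of_retract hTr (hperp q hq bb)
      (fun u => hA'1A' (hT'sub hp) (hF'sub hq) u)
    obtain ⟨e⟩ := DTTP.iso₁₂ hTr hzq
    exact hT'iso p z e hp
  -- characterisation of T
  have hTchar : ∀ {z : C}, z ∈ A → (∀ y ∈ F, ∀ f : z ⟶ y, f = 0) → z ∈ T := by
    intro z hz hperp
    obtain ⟨p, hp, q, hq, aa, bb, cc, hTr⟩ := hTFdec z hz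
    have hzq : IsZero q := DTTP.isZero_of_retract hTr (hperp q hq bb)
      (fun u => DTTP.orthO ht (show (-1:ℤ) < 0 by omega)
        (DTTP.shiftLe' ht 1 (hAle (hTsub hp)) (by omega)) (hAge (hFsub hq)) u)
    obtain ⟨e⟩ := DTTP.iso₁₂ hTr hzq
    exact hTiso p z e hp
  -- H1 of coconnective objects is zero
  have hH1zero : ∀ {Y : C}, Y ∈ Dle 0 → IsZero (H1 Y) := by
    intro Y hY
    have hY1 : Y⟦(1:ℤ)⟧ ∈ Dle 0 :=
      DTTP.leSub ht (show (-1:ℤ) ≤ 0 by omega) (DTTP.shiftLe' ht 1 hY (by omega))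
    obtain ⟨hH1A, τ, hτ, i, u, dd, hTr⟩ := hH1 Y hY1
    have hu : u = 0 := DTTP.orthO ht (show (0:ℤ) < 1 by omega) hY
      (DTTP.shiftGe' ht (-1) (hAge hH1A) (by omega)) u
    have hz : IsZero ((H1 Y)⟦(-1:ℤ)⟧) := DTTP.isZero_of_retract hTr hu
      (fun v => DTTP.orthO ht (show (-1:ℤ) < 1 by omega)
        (DTTP.shiftLe' ht 1 hτ (by omega))
        (DTTP.shiftGe' ht (-1) (hAge hH1A) (by omega)) v)
    exact DTTP.isZero_shift_reflect _ hz
  -- Dle' basics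
  have hDle'sh : ∀ {Y : C}, Y ∈ Dle' → Y⟦(1:ℤ)⟧ ∈ Dle 0 := fun hY => by
    rw [hDle'] at hY; exact hY.1
  have hDle'H1 : ∀ {Y : C}, Y ∈ Dle' → H1 Y ∈ T := fun hY => by
    rw [hDle'] at hY; exact hY.2
  have hDle'le1 : ∀ {Y : C}, Y ∈ Dle' → Y ∈ Dle 1 := fun hY =>
    DTTP.unshiftLe ht (hDle'sh hY) (by omega)
  -- Hom(Dle', A'⟦-1⟧) = 0
  have hDle'A' : ∀ {Y z : C}, Y ∈ Dle' → z ∈ A' → ∀ f : Y ⟶ z⟦(-1:ℤ)⟧, f = 0 := by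
    intro Y z hY hz f
    obtain ⟨hH1A, τ, hτ, i, u, dd, hTr⟩ := hH1 Y (hDle'sh hY)
    have h1 : i ≫ f = 0 := DTTP.orthO ht (show (0:ℤ) < 1 by omega) hτ
      (DTTP.shiftGe' ht (-1) (hA'ge0 hz) (by omega)) _
    obtain ⟨g, hg⟩ := DTTP.yo₂ hTr f h1
    have hg0 : g = 0 := DTTP.hz_shift (-1) (hTA' (hDle'H1 hY) hz) g
    rw [hg, hg0, comp_zero]
  -- uniqueness of H1
  have hH1uniq : ∀ {X₀ Y z : C} {i : Y ⟶ X₀} {u : X₀ ⟶ z⟦(-1:ℤ)⟧}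
      {dd : z⟦(-1:ℤ)⟧ ⟶ Y⟦(1:ℤ)⟧}, X₀⟦(1:ℤ)⟧ ∈ Dle 0 → Y ∈ Dle 0 → z ∈ A →
      (Triangle.mk i u dd ∈ distTriang C) → Nonempty (H1 X₀ ≅ z) := by
    intro X₀ Y z i u dd hX₀ hY hz hTr
    obtain ⟨hH1A, τ, hτ, i₂, u₂, dd₂, hTr₂⟩ := hH1 X₀ hX₀
    have key := DTTP.coneUnique hTr₂ hTr
      (DTTP.orthO ht (show (0:ℤ) < 1 by omega) hτ
        (DTTP.shiftGe' ht (-1) (hAge hz) (by omega)))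
      (DTTP.orthO ht (show (0:ℤ) < 1 by omega) hY
        (DTTP.shiftGe' ht (-1) (hAge hH1A) (by omega)))
      (DTTP.orthO ht (show (-1:ℤ) < 1 by omega) (DTTP.shiftLe' ht 1 hτ (by omega))
        (DTTP.shiftGe' ht (-1) (hAge hH1A) (by omega)))
      (DTTP.orthO ht (show (-1:ℤ) < 1 by omega) (DTTP.shiftLe' ht 1 hY (by omega))
        (DTTP.shiftGe' ht (-1) (hAge hz) (by omega)))
    obtain ⟨e⟩ := key
    exact ⟨(shiftFunctor C (-1:ℤ)).preimageIso e⟩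
  -- uniqueness of H1'
  have hH1'uniq : ∀ {X₀ Y z : C} {i : Y ⟶ X₀} {u : X₀ ⟶ z⟦(-1:ℤ)⟧}
      {dd : z⟦(-1:ℤ)⟧ ⟶ Y⟦(1:ℤ)⟧}, X₀⟦(1:ℤ)⟧ ∈ Dle' → Y ∈ Dle' → z ∈ A' →
      (Triangle.mk i u dd ∈ distTriang C) → Nonempty (H1' X₀ ≅ z) := by
    intro X₀ Y z i u dd hX₀ hY hz hTr
    obtain ⟨hNA', τ, hτ, i₂, u₂, dd₂, hTr₂⟩ := hH1' X₀ hX₀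
    have key := DTTP.coneUnique hTr₂ hTr
      (hDle'A' hτ hz) (hDle'A' hY hNA')
      (DTTP.orthO ht (show (0:ℤ) < 1 by omega)
        (DTTP.shiftLe' ht 1 (hDle'le1 hτ) (by omega))
        (DTTP.shiftGe' ht (-1) (hA'ge0 hNA') (by omega)))
      (DTTP.orthO ht (show (0:ℤ) < 1 by omega)
        (DTTP.shiftLe' ht 1 (hDle'le1 hY) (by omega))
        (DTTP.shiftGe' ht (-1) (hA'ge0 hz) (by omega)))
    obtain ⟨e⟩ := key
    exact ⟨(shiftFunctor C (-1:ℤ)).preimageIso e⟩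
  constructor
  · -- the torsion pair (T ⋆ T', F ∩ T'^⊥)
    refine ⟨?_, ?_, ?_, ?_, ?_, ?_⟩
    · -- T ⋆ T' ⊆ A
      rintro x ⟨t, htT, p, hpT', i, u, dd, hTr⟩
      exact hAmem
        (DTTP.extLe0 ht hTr (hAle (hTsub htT)) (hAle (hFsub (hT'le hpT'))))
        (DTTP.extGe ht 0 hTr (hAge (hTsub htT)) (hAge (hFsub (hT'le hpT'))))
    · exact fun x hx => hFsub hx.1
    · -- iso-closedness of T ⋆ T'
      rintro x y e ⟨t, htT, p, hpT', i, u, dd, hTr⟩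
      exact ⟨t, htT, p, hpT', i ≫ e.hom, e.inv ≫ u, dd, DTTP.distIso hTr e⟩
    · -- iso-closedness of F ∩ T'^⊥
      rintro x y e ⟨hxF, hxA, hx⟩
      refine ⟨hFiso x y e hxF, hAiso x y e hxA, fun q hq f => ?_⟩
      have h1 : f ≫ e.inv = 0 := hx q hq (f ≫ e.inv)
      calc f = (f ≫ e.inv) ≫ e.hom := by simp
      _ = 0 := by rw [h1, zero_comp]
    · -- orthogonality
      rintro x ⟨t, htT, p, hpT', i, u, dd, hTr⟩ y ⟨hyF, _, hyO⟩ f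
      have h1 : i ≫ f = 0 := hTForth t htT y hyF _
      obtain ⟨g, hg⟩ := DTTP.yo₂ hTr f h1
      rw [hg, hyO p hpT' g, comp_zero]
    · -- decomposition
      intro X hX
      obtain ⟨t, htT, fX, hfXF, a, b, c, hTr1⟩ := hTFdec X hX
      obtain ⟨t', ht'T', f', hf'F', d, e, g2, hTr2⟩ := hT'F'dec fX (hFA' hfXF)
      -- f' ∈ F
      obtain ⟨e₂, he₂F, s₂, hs₂T, i₂, u₂, dd₂, hTr3⟩ := hA'elim (hF'sub hf'F')
      have hu₂ : u₂ = 0 := by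
        have h1 : e ≫ u₂ = 0 := DTTP.orthO ht (show (0:ℤ) < 1 by omega)
          (hAle (hFsub hfXF)) (DTTP.shiftGe' ht (-1) (hAge (hTsub hs₂T)) (by omega)) _
        obtain ⟨ζ, hζ⟩ := DTTP.yo₂ (DTTP.rot hTr2) u₂ h1
        rw [hζ, DTTP.orthO ht (show (-1:ℤ) < 1 by omega)
          (DTTP.shiftLe' ht 1 (hAle (hFsub (hT'le ht'T'))) (by omega))
          (DTTP.shiftGe' ht (-1) (hAge (hTsub hs₂T)) (by omega)) ζ, comp_zero]
      have hzs₂ : IsZero (s₂⟦(-1:ℤ)⟧) := DTTP.isZero_of_retract hTr3 hu₂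
        (fun v => DTTP.orthO ht (show (-1:ℤ) < 1 by omega)
          (DTTP.shiftLe' ht 1 (hAle (hFsub he₂F)) (by omega))
          (DTTP.shiftGe' ht (-1) (hAge (hTsub hs₂T)) (by omega)) v)
      obtain ⟨ef'⟩ := DTTP.iso₁₂ hTr3 hzs₂
      have hf'F : f' ∈ F := hFiso e₂ f' ef' he₂F
      -- the fibre of X ⟶ f'
      obtain ⟨t'', m, n, hTr3'⟩ := distinguished_cocone_triangle₁ (b ≫ e)
      -- the master chase
      have key : ∀ {W' : C} (φ₁ : t''⟦(1:ℤ)⟧ ⟶ W'),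
          (∀ v : t⟦(1:ℤ)⟧ ⟶ W', v = 0) → (∀ v : t'⟦(1:ℤ)⟧ ⟶ W', v = 0) →
          ∃ ψ : X⟦(1:ℤ)⟧ ⟶ W', φ₁ = m⟦(1:ℤ)⟧' ≫ ψ := by
        intro W' φ₁ vT vT'
        have hβ : n ≫ φ₁ = 0 := by
          have hEβ : e ≫ n ≫ φ₁ = 0 := by
            obtain ⟨ξ, hξ⟩ := DTTP.yo₂ (DTTP.rot hTr1) (e ≫ n ≫ φ₁) (by
              have h0 : (b ≫ e) ≫ n = 0 := DTTP.cz₂₃ hTr3'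
              calc b ≫ e ≫ n ≫ φ₁ = ((b ≫ e) ≫ n) ≫ φ₁ := by
                    simp only [Category.assoc]
              _ = 0 := by rw [h0, zero_comp])
            rw [hξ, vT ξ, comp_zero]
          obtain ⟨ζ, hζ⟩ := DTTP.yo₂ (DTTP.rot hTr2) (n ≫ φ₁) hEβ
          rw [hζ, vT' ζ, comp_zero]
        obtain ⟨ψ₀, hψ₀⟩ := DTTP.yo₂ (DTTP.rot (DTTP.rot hTr3')) φ₁ hβ
        refine ⟨-ψ₀, ?_⟩
        rw [hψ₀, Preadditive.neg_comp, Preadditive.comp_neg]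
      -- Hom(t'', D_{≥1}) = 0
      have ht''Hom : ∀ {Z : C}, Z ∈ Dge 1 → ∀ φ : t'' ⟶ Z, φ = 0 := by
        intro Z hZ φ
        have hφ1 : (shiftFunctor C (1:ℤ)).map φ = 0 := by
          obtain ⟨ψ, hψ⟩ := key (φ⟦(1:ℤ)⟧')
            (fun v => DTTP.orthO ht (show (-1:ℤ) < 0 by omega)
              (DTTP.shiftLe' ht 1 (hAle (hTsub htT)) (by omega))
              (DTTP.shiftGe' ht 1 hZ (by omega)) v)
            (fun v => DTTP.orthO ht (show (-1:ℤ) < 0 by omega)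
              (DTTP.shiftLe' ht 1 (hAle (hFsub (hT'le ht'T'))) (by omega))
              (DTTP.shiftGe' ht 1 hZ (by omega)) v)
          rw [hψ, DTTP.orthO ht (show (-1:ℤ) < 0 by omega)
            (DTTP.shiftLe' ht 1 (hAle hX) (by omega))
            (DTTP.shiftGe' ht 1 hZ (by omega)) ψ, comp_zero]
        exact (shiftFunctor C (1:ℤ)).map_eq_zero_iff.mp hφ1
      -- Hom(t'', F') = 0
      have ht''F' : ∀ {y' : C}, y' ∈ F' → ∀ φ : t'' ⟶ y', φ = 0 := by
        intro y' hy' φ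
        have hφ1 : (shiftFunctor C (1:ℤ)).map φ = 0 := by
          obtain ⟨ψ, hψ⟩ := key (φ⟦(1:ℤ)⟧')
            (fun v => DTTP.hz_shift 1 (hTA' htT (hF'sub hy')) v)
            (fun v => DTTP.hz_shift 1 (fun f => hT'F'orth t' ht'T' y' hy' f) v)
          obtain ⟨ψ', hψ'⟩ := DTTP.yo₂s hTr1 1 ψ
            (DTTP.hz_shift 1 (hTA' htT (hF'sub hy')) _)
          obtain ⟨ψ'', hψ''⟩ := DTTP.yo₂s hTr2 1 ψ'
            (DTTP.hz_shift 1 (fun f => hT'F'orth t' ht'T' y' hy' f) _)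
          have h0 : m ≫ b ≫ e = 0 := DTTP.cz₁₂ hTr3'
          rw [hψ, hψ', hψ'']
          calc m⟦(1:ℤ)⟧' ≫ b⟦(1:ℤ)⟧' ≫ e⟦(1:ℤ)⟧' ≫ ψ''
              = (m ≫ b ≫ e)⟦(1:ℤ)⟧' ≫ ψ'' := by
                simp only [Functor.map_comp, Category.assoc]
          _ = 0 := by rw [h0, Functor.map_zero, zero_comp]
        exact (shiftFunctor C (1:ℤ)).map_eq_zero_iff.mp hφ1
      -- t'' ∈ A
      have ht''le : t'' ∈ Dle 0 := DTTP.charLe0 ht (fun Z hZ φ => ht''Hom hZ φ)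
      have ht''ge : t'' ∈ Dge 0 := by
        have h2 : t''⟦(1:ℤ)⟧ ∈ Dge (-1) :=
          DTTP.extGe ht (-1) (DTTP.rot (DTTP.rot hTr3'))
            (DTTP.geSub ht (show (-1:ℤ) ≤ 0 by omega) (hAge (hFsub hf'F)))
            (DTTP.shiftGe' ht 1 (hAge hX) (by omega))
        exact DTTP.unshiftGe ht h2 (by omega)
      -- torsion decomposition of t''
      obtain ⟨tt, httT, ff, hffF, ta, tb, tc, hTr4⟩ := hTFdec t'' (hAmem ht''le ht''ge)
      have hffT' : ff ∈ T' := by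
        refine hT'char (hFA' hffF) (fun y' hy' φ => ?_)
        obtain ⟨ξ, hξ⟩ := DTTP.yo₂ (DTTP.rot hTr4) φ (ht''F' hy' _)
        rw [hξ, DTTP.orthO ht (show (-1:ℤ) < 0 by omega)
          (DTTP.shiftLe' ht 1 (hAle (hTsub httT)) (by omega))
          (hA'ge0 (hF'sub hy')) ξ, comp_zero]
      refine ⟨t'', ⟨tt, httT, ff, hffT', ta, tb, tc, hTr4⟩,
        f', ⟨hf'F, hFsub hf'F, fun q hq f => hT'F'orth q hq f' hf'F' f⟩,
        m, b ≫ e, n, hTr3'⟩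
  · -- equality of the twice-tilted aisles
    ext X
    simp only [Set.mem_setOf_eq]
    constructor
    · rintro ⟨hX1, hX2⟩
      obtain ⟨hNA', τ', hτ'Dle', i', x', dd', hTr1⟩ := hH1' X hX1
      have hNF : H1' X ∈ F := hT'le hX2
      -- X ∈ D_{≤1}
      have hXle : X⟦(1:ℤ)⟧ ∈ Dle 0 := by
        refine DTTP.charLe0 ht (fun Z hZ f => ?_)
        have h1 : i'⟦(1:ℤ)⟧' ≫ f = 0 := DTTP.orthO ht (show (0:ℤ) < 1 by omega)
          (DTTP.shiftLe' ht 1 (hDle'le1 hτ'Dle') (by omega)) hZ _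
        obtain ⟨ψ, hψ⟩ := DTTP.yo₂s hTr1 1 f h1
        have hψ0 : ψ = 0 := DTTP.hz_conj ((DTTP.negShiftIso (H1' X)).symm) (Iso.refl Z)
          (DTTP.orthO ht (show (0:ℤ) < 1 by omega) (hAle (hFsub hNF)) hZ) ψ
        rw [hψ, hψ0, comp_zero]
      obtain ⟨hBA, τ, hτle, i, x, dd, hTrX⟩ := hH1 X hXle
      obtain ⟨hSA, τ₂, hτ₂le, jj, σ₂, ddσ, hTrτ'⟩ := hH1 τ' (hDle'sh hτ'Dle')
      obtain ⟨E, y, dE, hTrE⟩ := distinguished_cocone_triangle (jj ≫ i')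
      -- every map from D_{≤0} to X factors through τ₂
      have hfact : ∀ {W : C}, W ∈ Dle 0 → ∀ ψ : W ⟶ X, ∃ ψ'', ψ = ψ'' ≫ (jj ≫ i') := by
        intro W hW ψ
        obtain ⟨ψ', hψ'⟩ := DTTP.co₂ hTr1 ψ (DTTP.orthO ht (show (0:ℤ) < 1 by omega) hW
          (DTTP.shiftGe' ht (-1) (hAge (hFsub hNF)) (by omega)) _)
        obtain ⟨ψ'', hψ''⟩ := DTTP.co₂ hTrτ' ψ' (DTTP.orthO ht (show (0:ℤ) < 1 by omega) hW
          (DTTP.shiftGe' ht (-1) (hAge hSA) (by omega)) _)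
        exact ⟨ψ'', by rw [hψ', hψ'', Category.assoc]⟩
      -- maps from D_{≤0} into τ₂⟦1⟧ vanishing after jj≫i' vanish
      have hjmono : ∀ {W : C}, W ∈ Dle 0 → ∀ α : W ⟶ τ₂⟦(1:ℤ)⟧,
          α ≫ (jj ≫ i')⟦(1:ℤ)⟧' = 0 → α = 0 := by
        intro W hW α hα
        have h1 : α ≫ jj⟦(1:ℤ)⟧' = 0 := by
          have h2 : (α ≫ jj⟦(1:ℤ)⟧') ≫ i'⟦(1:ℤ)⟧' = 0 := by
            rw [Category.assoc, ← Functor.map_comp]; exact hα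
          obtain ⟨γ, hγ⟩ := DTTP.co₂ (DTTP.rot (DTTP.rot hTr1)) (α ≫ jj⟦(1:ℤ)⟧')
            (by rw [Preadditive.comp_neg, h2, neg_zero])
          rw [hγ, DTTP.orthO ht (show (0:ℤ) < 1 by omega) hW
            (DTTP.shiftGe' ht (-1) (hAge (hFsub hNF)) (by omega)) γ, zero_comp]
        obtain ⟨γ', hγ'⟩ := DTTP.co₂ (DTTP.rot (DTTP.rot hTrτ')) α
          (by rw [Preadditive.comp_neg, h1, neg_zero])
        rw [hγ', DTTP.orthO ht (show (0:ℤ) < 1 by omega) hW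
          (DTTP.shiftGe' ht (-1) (hAge hSA) (by omega)) γ', zero_comp]
      -- E ∈ D_{≥1}
      have hEge1 : E ∈ Dge 1 := by
        refine DTTP.charGe1 ht (fun W hW φ => ?_)
        have hα : φ ≫ dE = 0 := by
          refine hjmono hW (φ ≫ dE) ?_
          rw [Category.assoc, DTTP.cz₃₁ hTrE, comp_zero]
        obtain ⟨ψg, hψg⟩ := DTTP.co₂ (DTTP.rot hTrE) φ hα
        obtain ⟨ψ'', hψ''⟩ := hfact hW ψg
        rw [hψg, hψ'', Category.assoc, DTTP.cz₁₂ hTrE, comp_zero]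
      -- E ≅ B⟦-1⟧
      have hEB : Nonempty (E ≅ (H1 X)⟦(-1:ℤ)⟧) := DTTP.coneUnique hTrE hTrX
        (DTTP.orthO ht (show (0:ℤ) < 1 by omega) hτ₂le
          (DTTP.shiftGe' ht (-1) (hAge hBA) (by omega)))
        (DTTP.orthO ht (show (0:ℤ) < 1 by omega) hτle hEge1)
        (DTTP.orthO ht (show (-1:ℤ) < 1 by omega)
          (DTTP.shiftLe' ht 1 hτ₂le (by omega)) hEge1)
        (DTTP.orthO ht (show (-1:ℤ) < 1 by omega)
          (DTTP.shiftLe' ht 1 hτle (by omega))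
          (DTTP.shiftGe' ht (-1) (hAge hBA) (by omega)))
      -- Hom(E, F'⟦-1⟧) = 0
      have hEorth : ∀ {y' : C}, y' ∈ F' → ∀ φ : E ⟶ y'⟦(-1:ℤ)⟧, φ = 0 := by
        intro y' hy' φ
        have h1 : y ≫ φ = 0 := by
          obtain ⟨χ, hχ⟩ := DTTP.yo₂ hTr1 (y ≫ φ) (hDle'A' hτ'Dle' (hF'sub hy') _)
          have hχ0 : χ = 0 :=
            DTTP.hz_shift (-1) (fun f => hT'F'orth (H1' X) hX2 y' hy' f) χ
          rw [hχ, hχ0, comp_zero]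
        obtain ⟨ξ, hξ⟩ := DTTP.yo₂ (DTTP.rot hTrE) φ h1
        rw [hξ, DTTP.orthO ht (show (-1:ℤ) < 1 by omega)
          (DTTP.shiftLe' ht 1 hτ₂le (by omega))
          (DTTP.shiftGe' ht (-1) (hA'ge0 (hF'sub hy')) (by omega)) ξ, comp_zero]
      -- Hom(H1 X, F') = 0
      have hBorth : ∀ {y' : C}, y' ∈ F' → ∀ φ : H1 X ⟶ y', φ = 0 := by
        intro y' hy' φ
        obtain ⟨eEB⟩ := hEB
        have hv : ∀ f : (H1 X)⟦(-1:ℤ)⟧ ⟶ y'⟦(-1:ℤ)⟧, f = 0 :=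
          DTTP.hz_conj eEB (Iso.refl _) (hEorth hy')
        have : (shiftFunctor C (-1:ℤ)).map φ = 0 := hv _
        exact (shiftFunctor C (-1:ℤ)).map_eq_zero_iff.mp this
      -- conclude : H1 X ∈ T ⋆ T'
      obtain ⟨tt, httT, ff, hffF, ta, tb, tc, hTrB⟩ := hTFdec (H1 X) hBA
      have hffT' : ff ∈ T' := by
        refine hT'char (hFA' hffF) (fun y' hy' φ => ?_)
        obtain ⟨ξ, hξ⟩ := DTTP.yo₂ (DTTP.rot hTrB) φ (hBorth hy' _)
        rw [hξ, DTTP.orthO ht (show (-1:ℤ) < 0 by omega)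
          (DTTP.shiftLe' ht 1 (hAle (hTsub httT)) (by omega))
          (hA'ge0 (hF'sub hy')) ξ, comp_zero]
      exact ⟨hXle, tt, httT, ff, hffT', ta, tb, tc, hTrB⟩
    · rintro ⟨hXle1, hBstar⟩
      obtain ⟨hBA, τ, hτle, i, x, dd, hTrX⟩ := hH1 X hXle1
      obtain ⟨t₁, ht₁T, p₁, hp₁T', a₁, v₁, dd₁, hTrB⟩ := hBstar
      obtain ⟨Y₀, m₀, dd₀, hTrY⟩ := distinguished_cocone_triangle₁ (x ≫ v₁⟦(-1:ℤ)⟧')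
      have hXDle' : X⟦(1:ℤ)⟧ ∈ Dle' := by
        rw [hDle']
        exact ⟨DTTP.leSub ht (show (-1:ℤ) ≤ 0 by omega)
          (DTTP.shiftLe' ht 1 hXle1 (by omega)), hzT (hH1zero hXle1)⟩
      have hp₁F : p₁ ∈ F := hT'le hp₁T'
      -- Y₀ ∈ D_{≤0} after shift
      have hY₀le : Y₀⟦(1:ℤ)⟧ ∈ Dle 0 := by
        refine DTTP.charLe0 ht (fun Z hZ φ₁ => ?_)
        have hβ : dd₀ ≫ φ₁ = 0 := by
          have h1 : v₁⟦(-1:ℤ)⟧' ≫ dd₀ ≫ φ₁ = 0 := by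
            obtain ⟨ξ, hξ⟩ := DTTP.yo₂ (DTTP.rot hTrX)
              (v₁⟦(-1:ℤ)⟧' ≫ dd₀ ≫ φ₁) (by
                have h0 : (x ≫ v₁⟦(-1:ℤ)⟧') ≫ dd₀ = 0 := DTTP.cz₂₃ hTrY
                calc x ≫ v₁⟦(-1:ℤ)⟧' ≫ dd₀ ≫ φ₁
                    = ((x ≫ v₁⟦(-1:ℤ)⟧') ≫ dd₀) ≫ φ₁ := by simp only [Category.assoc]
                _ = 0 := by rw [h0, zero_comp])
            rw [hξ, DTTP.orthO ht (show (-1:ℤ) < 1 by omega)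
              (DTTP.shiftLe' ht 1 hτle (by omega)) hZ ξ, comp_zero]
          exact DTTP.yo₃sz hTrB (-1) (dd₀ ≫ φ₁) h1
            (fun u => DTTP.orthO ht (show (0:ℤ) < 1 by omega)
              (DTTP.shiftLe' ht 1
                (DTTP.shiftLe' ht (-1) (hAle (hTsub ht₁T)) (show (0:ℤ)-(-1) = 1 by omega))
                (show (1:ℤ)-1 = 0 by omega)) hZ u)
        obtain ⟨ψ, hψ⟩ := DTTP.yo₂ (DTTP.rot (DTTP.rot hTrY)) φ₁ hβ
        rw [hψ, DTTP.orthO ht (show (0:ℤ) < 1 by omega) hXle1 hZ ψ, comp_zero]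
      -- Hom(Y₀, F⟦-1⟧) = 0
      have hY₀F : ∀ {w : C}, w ∈ F → ∀ φ : Y₀ ⟶ w⟦(-1:ℤ)⟧, φ = 0 := by
        intro w hw φ
        have hWge : w⟦(-1:ℤ)⟧⟦(1:ℤ)⟧ ∈ Dge 0 :=
          DTTP.shiftGe' ht 1 (DTTP.shiftGe' ht (-1) (hAge (hFsub hw)) (show (0:ℤ)-(-1) = 1 by omega))
            (show (1:ℤ)-1 = 0 by omega)
        have hβ : dd₀ ≫ φ⟦(1:ℤ)⟧' = 0 := by
          have h1 : v₁⟦(-1:ℤ)⟧' ≫ dd₀ ≫ φ⟦(1:ℤ)⟧' = 0 := by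
            obtain ⟨ξ, hξ⟩ := DTTP.yo₂ (DTTP.rot hTrX)
              (v₁⟦(-1:ℤ)⟧' ≫ dd₀ ≫ φ⟦(1:ℤ)⟧') (by
                have h0 : (x ≫ v₁⟦(-1:ℤ)⟧') ≫ dd₀ = 0 := DTTP.cz₂₃ hTrY
                calc x ≫ v₁⟦(-1:ℤ)⟧' ≫ dd₀ ≫ φ⟦(1:ℤ)⟧'
                    = ((x ≫ v₁⟦(-1:ℤ)⟧') ≫ dd₀) ≫ φ⟦(1:ℤ)⟧' := by
                      simp only [Category.assoc]
                _ = 0 := by rw [h0, zero_comp])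
            rw [hξ, DTTP.orthO ht (show (-1:ℤ) < 0 by omega)
              (DTTP.shiftLe' ht 1 hτle (by omega)) hWge ξ, comp_zero]
          exact DTTP.yo₃sz hTrB (-1) (dd₀ ≫ φ⟦(1:ℤ)⟧') h1
            (fun u => DTTP.hz_shift 1 (DTTP.hz_shift (-1) (hTForth t₁ ht₁T w hw)) u)
        obtain ⟨ψ, hψ⟩ := DTTP.yo₂ (DTTP.rot (DTTP.rot hTrY)) (φ⟦(1:ℤ)⟧') hβ
        obtain ⟨χ, hχ⟩ := DTTP.yo₂s hTrX 1 ψ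
          (DTTP.orthO ht (show (-1:ℤ) < 0 by omega)
            (DTTP.shiftLe' ht 1 hτle (by omega)) hWge _)
        obtain ⟨ρ, hρ⟩ := DTTP.co₂s hTrB (-1) (m₀ ≫ x)
          (by rw [Category.assoc]; exact DTTP.cz₁₂ hTrY)
        have hfinal : (shiftFunctor C (1:ℤ)).map φ = 0 := by
          rw [hψ, hχ]
          have hax : a₁⟦(-1:ℤ)⟧'⟦(1:ℤ)⟧' ≫ χ = 0 :=
            DTTP.hz_shift 1 (DTTP.hz_shift (-1) (hTForth t₁ ht₁T w hw)) _
          calc (-m₀⟦(1:ℤ)⟧') ≫ x⟦(1:ℤ)⟧' ≫ χ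
              = -((m₀ ≫ x)⟦(1:ℤ)⟧' ≫ χ) := by
                simp only [Functor.map_comp, Preadditive.neg_comp, Category.assoc]
          _ = -((ρ ≫ a₁⟦(-1:ℤ)⟧')⟦(1:ℤ)⟧' ≫ χ) := by rw [hρ]
          _ = -(ρ⟦(1:ℤ)⟧' ≫ (a₁⟦(-1:ℤ)⟧'⟦(1:ℤ)⟧' ≫ χ)) := by
                simp only [Functor.map_comp, Category.assoc]
          _ = 0 := by rw [hax, comp_zero, neg_zero]
        exact (shiftFunctor C (1:ℤ)).map_eq_zero_iff.mp hfinal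
      -- H1 Y₀ ∈ T
      have hH1Y₀T : H1 Y₀ ∈ T := by
        obtain ⟨hB₀A, τ₀, hτ₀le, i₀, x₀, dd₀', hTrY0⟩ := hH1 Y₀ hY₀le
        refine hTchar hB₀A (fun w hw φ => ?_)
        have h1 : x₀ ≫ (shiftFunctor C (-1:ℤ)).map φ = 0 := hY₀F hw _
        obtain ⟨ξ, hξ⟩ := DTTP.yo₂ (DTTP.rot hTrY0) ((shiftFunctor C (-1:ℤ)).map φ) h1
        have : (shiftFunctor C (-1:ℤ)).map φ = 0 := by
          rw [hξ, DTTP.orthO ht (show (-1:ℤ) < 1 by omega)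
            (DTTP.shiftLe' ht 1 hτ₀le (by omega))
            (DTTP.shiftGe' ht (-1) (hAge (hFsub hw)) (by omega)) ξ, comp_zero]
        exact (shiftFunctor C (-1:ℤ)).map_eq_zero_iff.mp this
      have hY₀Dle' : Y₀ ∈ Dle' := by rw [hDle']; exact ⟨hY₀le, hH1Y₀T⟩
      -- H1' X ≅ p₁
      obtain ⟨eN⟩ : Nonempty (H1' X ≅ p₁) :=
        hH1'uniq hXDle' hY₀Dle' (hFA' hp₁F) hTrY
      exact ⟨hXDle', hT'iso p₁ (H1' X) eN.symm hp₁T'⟩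
end
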